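/- arXiv:1911.12649 — 9 statements merged into one kernel-verified Lean document; each statement's English description precedes it below -/
import Mathlib

section
/- For every integer n ≥ 1, Π·𝔦 = 𝔦·Π as subsets of Matₙ(R); this common set is the two-sided ideal of 𝔦 consisting of all matrices in 𝔦 whose entries on or below the diagonal lie in 𝔪, and it equals the Jacobson radical of the ring 𝔦 (the intersection of all maximal left ideals of 𝔦). -/
open IsLocalRing

variable (R : Type*) [CommRing R] [IsDomain R] [IsDiscreteValuationRing R]

/-- The Iwahori order `𝔦`: the subring of `Matₙ(R)` consisting of matrices whose entries
strictly below the diagonal lie in the maximal ideal `𝔪`. -/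
def iwahori (n : ℕ) : Subring (Matrix (Fin n) (Fin n) R) where
  carrier := {M | ∀ i j : Fin n, (j : ℕ) < (i : ℕ) → M i j ∈ maximalIdeal R}
  zero_mem' := by
    intro i j _
    simpa using (maximalIdeal R).zero_mem
  one_mem' := by
    intro i j h
    rw [Matrix.one_apply_ne (Fin.ne_of_val_ne h.ne')]
    exact (maximalIdeal R).zero_mem
  add_mem' := by
    intro A B hA hB i j h
    simpa [Matrix.add_apply] using add_mem (hA i j h) (hB i j h)
  neg_mem' := by
    intro A hA i j h
    simpa [Matrix.neg_apply] using neg_mem (hA i j h)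
  mul_mem' := by
    intro A B hA hB i j h
    rw [Matrix.mul_apply]
    refine Submodule.sum_mem _ fun l _ => ?_
    rcases lt_or_ge (j : ℕ) (l : ℕ) with hl | hl
    · exact Ideal.mul_mem_left _ _ (hB l j hl)
    · exact Ideal.mul_mem_right _ _ (hA i l (lt_of_le_of_lt hl h))

/-- The matrix `Π`, with `(i, i+1)`-entries `1`, `(n,1)`-entry `ϖ` and all other
entries `0`. -/
def PiMat (ϖ : R) (n : ℕ) : Matrix (Fin n) (Fin n) R :=
  Matrix.of fun i j => if (j : ℕ) = (i : ℕ) + 1 then 1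
    else if (i : ℕ) = n - 1 ∧ (j : ℕ) = 0 then ϖ else 0

variable {R}

lemma piMat_apply (ϖ : R) {n : ℕ} (i j : Fin n) :
    PiMat R ϖ n i j = if (j : ℕ) = (i : ℕ) + 1 then 1
      else if (i : ℕ) = n - 1 ∧ (j : ℕ) = 0 then ϖ else 0 := rfl

lemma piMat_mul_apply (ϖ : R) {n : ℕ} (X : Matrix (Fin n) (Fin n) R) (i j : Fin n) :
    (PiMat R ϖ n * X) i j =
      if h : (i : ℕ) + 1 < n then X ⟨(i : ℕ) + 1, h⟩ j else ϖ * X ⟨0, i.pos⟩ j := by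
  rw [Matrix.mul_apply]
  by_cases h : (i : ℕ) + 1 < n
  · rw [dif_pos h, Finset.sum_eq_single (⟨(i : ℕ) + 1, h⟩ : Fin n)]
    · rw [piMat_apply, if_pos rfl, one_mul]
    · intro k _ hk
      have hk' : (k : ℕ) ≠ (i : ℕ) + 1 := fun hv => hk (Fin.ext hv)
      have : ¬ ((i : ℕ) = n - 1 ∧ (k : ℕ) = 0) := by
        rintro ⟨h1, _⟩; omega
      rw [piMat_apply, if_neg hk', if_neg this, zero_mul]
    · intro h'; exact absurd (Finset.mem_univ _) h'
  · rw [dif_neg h, Finset.sum_eq_single (⟨0, i.pos⟩ : Fin n)]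
    · have hi : (i : ℕ) = n - 1 := by have := i.isLt; omega
      rw [piMat_apply]
      rw [if_neg (by simp), if_pos ⟨hi, rfl⟩]
    · intro k _ hk
      have hk0 : (k : ℕ) ≠ 0 := fun hv => hk (Fin.ext hv)
      have hk1 : (k : ℕ) ≠ (i : ℕ) + 1 := by have := k.isLt; omega
      rw [piMat_apply, if_neg hk1, if_neg (by rintro ⟨_, h2⟩; exact hk0 h2), zero_mul]
    · intro h'; exact absurd (Finset.mem_univ _) h'

lemma mul_piMat_apply (ϖ : R) {n : ℕ} (X : Matrix (Fin n) (Fin n) R) (i j : Fin n) :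
    (X * PiMat R ϖ n) i j =
      if 0 < (j : ℕ) then X i ⟨(j : ℕ) - 1, lt_of_le_of_lt (Nat.sub_le _ _) j.isLt⟩
      else ϖ * X i ⟨n - 1, Nat.sub_lt j.pos one_pos⟩ := by
  rw [Matrix.mul_apply]
  by_cases h : 0 < (j : ℕ)
  · rw [if_pos h,
      Finset.sum_eq_single (⟨(j : ℕ) - 1, lt_of_le_of_lt (Nat.sub_le _ _) j.isLt⟩ : Fin n)]
    · rw [piMat_apply, if_pos (show (j:ℕ) = (j:ℕ) - 1 + 1 by omega), mul_one]
    · intro k _ hk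
      have hk' : (k : ℕ) ≠ (j : ℕ) - 1 := fun hv => hk (Fin.ext hv)
      rw [piMat_apply, if_neg (show ¬ (j:ℕ) = (k:ℕ) + 1 by omega), if_neg (by rintro ⟨_, h2⟩; omega), mul_zero]
    · intro h'; exact absurd (Finset.mem_univ _) h'
  · rw [if_neg h, Finset.sum_eq_single (⟨n - 1, Nat.sub_lt j.pos one_pos⟩ : Fin n)]
    · rw [piMat_apply, if_neg (show ¬ (j:ℕ) = (n:ℕ) - 1 + 1 by omega), if_pos ⟨rfl, by omega⟩, mul_comm]
    · intro k _ hk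
      have hk' : (k : ℕ) ≠ n - 1 := fun hv => hk (Fin.ext hv)
      rw [piMat_apply, if_neg (by omega), if_neg (by rintro ⟨h1, _⟩; exact hk' h1), mul_zero]
    · intro h'; exact absurd (Finset.mem_univ _) h'

set_option linter.unusedSectionVars false

lemma mem_iwahori_iff {n : ℕ} {M : Matrix (Fin n) (Fin n) R} :
    M ∈ iwahori R n ↔ ∀ i j : Fin n, (j : ℕ) < (i : ℕ) → M i j ∈ maximalIdeal R := Iff.rfl

lemma piMat_mul_image (ϖ : R) (hϖ : Ideal.span {ϖ} = maximalIdeal R) (n : ℕ) (hn : 1 ≤ n) :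
    ((fun x => PiMat R ϖ n * x) '' (iwahori R n : Set (Matrix (Fin n) (Fin n) R))) =
      {M : Matrix (Fin n) (Fin n) R | ∀ i j : Fin n, (j : ℕ) ≤ (i : ℕ) →
        M i j ∈ maximalIdeal R} := by
  have hϖm : ϖ ∈ maximalIdeal R := hϖ ▸ Ideal.mem_span_singleton_self ϖ
  ext M
  constructor
  · rintro ⟨X, hX, rfl⟩ i j hji
    dsimp only
    rw [piMat_mul_apply]
    split_ifs with h
    · exact hX _ _ (by simpa using Nat.lt_succ_of_le hji)
    · exact Ideal.mul_mem_right _ _ hϖm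
  · intro hM
    have hdiv : ∀ j : Fin n, ∃ a : R, a * ϖ = M ⟨n - 1, Nat.sub_lt hn one_pos⟩ j := by
      intro j
      rw [← Ideal.mem_span_singleton', hϖ]
      exact hM _ _ (by have := j.isLt; simp only [Fin.val_mk]; omega)
    choose c hc using hdiv
    refine ⟨Matrix.of fun i j =>
      if h : 0 < (i : ℕ) then M ⟨(i : ℕ) - 1, lt_of_le_of_lt (Nat.sub_le _ _) i.isLt⟩ j
      else c j, ?_, ?_⟩
    · rw [SetLike.mem_coe, mem_iwahori_iff]
      intro i j hji
      rw [Matrix.of_apply, dif_pos (by omega)]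
      exact hM _ _ (by simp only [Fin.val_mk]; omega)
    · ext i j
      dsimp only
      rw [piMat_mul_apply]
      split_ifs with h
      · rw [Matrix.of_apply, dif_pos (by simp only [Fin.val_mk]; omega)]
        congr 1
      · rw [Matrix.of_apply, dif_neg (by simp only [Fin.val_mk]; omega), mul_comm, hc]
        congr 1
        exact Fin.ext (by have := i.isLt; simp only [Fin.val_mk]; omega)

lemma mul_piMat_image (ϖ : R) (hϖ : Ideal.span {ϖ} = maximalIdeal R) (n : ℕ) (hn : 1 ≤ n) :
    ((fun x => x * PiMat R ϖ n) '' (iwahori R n : Set (Matrix (Fin n) (Fin n) R))) =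
      {M : Matrix (Fin n) (Fin n) R | ∀ i j : Fin n, (j : ℕ) ≤ (i : ℕ) →
        M i j ∈ maximalIdeal R} := by
  have hϖm : ϖ ∈ maximalIdeal R := hϖ ▸ Ideal.mem_span_singleton_self ϖ
  ext M
  constructor
  · rintro ⟨X, hX, rfl⟩ i j hji
    dsimp only
    rw [mul_piMat_apply]
    split_ifs with h
    · exact hX _ _ (by simp only [Fin.val_mk]; omega)
    · exact Ideal.mul_mem_right _ _ hϖm
  · intro hM
    have hdiv : ∀ i : Fin n, ∃ a : R, a * ϖ = M i ⟨0, hn⟩ := by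
      intro i
      rw [← Ideal.mem_span_singleton', hϖ]
      exact hM _ _ (by simp)
    choose c hc using hdiv
    refine ⟨Matrix.of fun i j =>
      if h : (j : ℕ) + 1 < n then M i ⟨(j : ℕ) + 1, h⟩
      else c i, ?_, ?_⟩
    · rw [SetLike.mem_coe, mem_iwahori_iff]
      intro i j hji
      rw [Matrix.of_apply, dif_pos (by have := i.isLt; omega)]
      exact hM _ _ (by simp only [Fin.val_mk]; omega)
    · ext i j
      dsimp only
      rw [mul_piMat_apply]
      split_ifs with h
      · rw [Matrix.of_apply, dif_pos (by simp only [Fin.val_mk]; have := j.isLt; omega)]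
        congr 1
        exact Fin.ext (by simp only [Fin.val_mk]; omega)
      · rw [Matrix.of_apply, dif_neg (by simp only [Fin.val_mk]; omega), mul_comm, hc]
        congr 1
        exact Fin.ext (by simp only [Fin.val_mk]; omega)

lemma memS_mul_left {n : ℕ} {a M : Matrix (Fin n) (Fin n) R}
    (ha : a ∈ iwahori R n)
    (hM : ∀ i j : Fin n, (j : ℕ) ≤ (i : ℕ) → M i j ∈ maximalIdeal R) :
    ∀ i j : Fin n, (j : ℕ) ≤ (i : ℕ) → (a * M) i j ∈ maximalIdeal R := by
  intro i j hji
  rw [Matrix.mul_apply]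
  refine Submodule.sum_mem _ fun k _ => ?_
  rcases le_or_gt (j : ℕ) (k : ℕ) with hk | hk
  · exact Ideal.mul_mem_left _ _ (hM k j hk)
  · exact Ideal.mul_mem_right _ _ (ha i k (by omega))

lemma memS_mul_right {n : ℕ} {a M : Matrix (Fin n) (Fin n) R}
    (ha : a ∈ iwahori R n)
    (hM : ∀ i j : Fin n, (j : ℕ) ≤ (i : ℕ) → M i j ∈ maximalIdeal R) :
    ∀ i j : Fin n, (j : ℕ) ≤ (i : ℕ) → (M * a) i j ∈ maximalIdeal R := by
  intro i j hji
  rw [Matrix.mul_apply]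
  refine Submodule.sum_mem _ fun k _ => ?_
  rcases le_or_gt (k : ℕ) (i : ℕ) with hk | hk
  · exact Ideal.mul_mem_right _ _ (hM i k hk)
  · exact Ideal.mul_mem_left _ _ (ha k j (by omega))

lemma pow_memS {n : ℕ} {s : Matrix (Fin n) (Fin n) R}
    (hs : ∀ i j : Fin n, (j : ℕ) ≤ (i : ℕ) → s i j ∈ maximalIdeal R) :
    ∀ k : ℕ, ∀ i j : Fin n, (j : ℕ) < (i : ℕ) + (k + 1) →
      (s ^ (k + 1)) i j ∈ maximalIdeal R := by
  intro k
  induction k with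
  | zero => intro i j h; rw [pow_one]; exact hs i j (by omega)
  | succ m ih =>
    intro i j h
    rw [pow_succ, Matrix.mul_apply]
    refine Submodule.sum_mem _ fun l _ => ?_
    rcases le_or_gt (j : ℕ) (l : ℕ) with hl | hl
    · exact Ideal.mul_mem_left _ _ (hs l j hl)
    · exact Ideal.mul_mem_right _ _ (ih i l (by omega))

lemma pow_card_memS {n : ℕ} (hn : 1 ≤ n) {s : Matrix (Fin n) (Fin n) R}
    (hs : ∀ i j : Fin n, (j : ℕ) ≤ (i : ℕ) → s i j ∈ maximalIdeal R) :
    ∀ i j : Fin n, (s ^ n) i j ∈ maximalIdeal R := by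
  intro i j
  obtain ⟨m, rfl⟩ : ∃ m, n = m + 1 := ⟨n - 1, by omega⟩
  exact pow_memS hs m i j (by have := j.isLt; omega)

lemma one_sub_isUnit {n : ℕ} (hn : 1 ≤ n) {s : Matrix (Fin n) (Fin n) R}
    (hs : ∀ i j : Fin n, (j : ℕ) ≤ (i : ℕ) → s i j ∈ maximalIdeal R) :
    ∃ B : Matrix (Fin n) (Fin n) R, B ∈ iwahori R n ∧
      B * (1 - s) = 1 ∧ (1 - s) * B = 1 := by
  set A := s ^ n with hA
  have hAm : ∀ i j : Fin n, A i j ∈ maximalIdeal R := pow_card_memS hn hs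
  have hdet : IsUnit (1 - A).det := by
    rw [← IsLocalRing.notMem_maximalIdeal]
    intro hd
    have h1 : (Ideal.Quotient.mk (maximalIdeal R)).mapMatrix (1 - A) = 1 := by
      ext i j
      simp only [RingHom.mapMatrix_apply, Matrix.map_apply, Matrix.sub_apply, map_sub,
        Ideal.Quotient.eq_zero_iff_mem.mpr (hAm i j), sub_zero, Matrix.one_apply, apply_ite,
        map_one, map_zero]
      split_ifs with h <;> simp [h]
    have h2 := RingHom.map_det (Ideal.Quotient.mk (maximalIdeal R)) (1 - A)
    rw [h1, Matrix.det_one] at h2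
    haveI := Ideal.Quotient.nontrivial_iff.mpr (maximalIdeal.isMaximal R).ne_top
    exact zero_ne_one ((Ideal.Quotient.eq_zero_iff_mem.mpr hd).symm.trans h2)
  set C := (1 - A)⁻¹ with hCdef
  have hC1 : C * (1 - A) = 1 := Matrix.nonsing_inv_mul _ hdet
  have hC2 : (1 - A) * C = 1 := Matrix.mul_nonsing_inv _ hdet
  have hCeq : C = 1 + A * C := by
    have h := hC2
    rw [sub_mul, one_mul] at h
    exact sub_eq_iff_eq_add.mp h
  have hC𝔦 : C ∈ iwahori R n := by
    intro i j hji
    rw [hCeq, Matrix.add_apply, Matrix.one_apply_ne (Fin.ne_of_val_ne hji.ne'), zero_add,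
      Matrix.mul_apply]
    exact Submodule.sum_mem _ fun k _ => Ideal.mul_mem_right _ _ (hAm i k)
  have hsA : s * (1 - A) = (1 - A) * s := by
    have h : s * A = A * s := ((Commute.refl s).pow_right n).eq
    simp [mul_sub, sub_mul, h]
  have hcomm : s * C = C * s := by
    calc s * C = (C * (1 - A)) * (s * C) := by rw [hC1, one_mul]
    _ = C * ((1 - A) * s) * C := by rw [mul_assoc, ← mul_assoc (1 - A) s C, ← mul_assoc]
    _ = C * (s * (1 - A)) * C := by rw [hsA]
    _ = (C * s) * ((1 - A) * C) := by rw [mul_assoc, mul_assoc, mul_assoc]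
    _ = C * s := by rw [hC2, mul_one]
  have hCs : C * (1 - s) = (1 - s) * C := by
    simp [mul_sub, sub_mul, hcomm]
  have hgeom : (∑ k ∈ Finset.range n, s ^ k) * (1 - s) = 1 - A := by
    rw [hA, ← neg_sub s 1, mul_neg, geom_sum_mul, neg_sub]
  have hgeom' : (1 - s) * (∑ k ∈ Finset.range n, s ^ k) = 1 - A := by
    rw [hA, ← neg_sub s 1, neg_mul, mul_geom_sum, neg_sub]
  refine ⟨(∑ k ∈ Finset.range n, s ^ k) * C, ?_, ?_, ?_⟩
  · exact Subring.mul_mem _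
      (Subring.sum_mem _ fun k _ => Subring.pow_mem _ (show s ∈ iwahori R n from fun i j h => hs i j h.le) k) hC𝔦
  · rw [mul_assoc, hCs, ← mul_assoc, hgeom, hC2]
  · rw [← mul_assoc, hgeom', hC2]

def diagIdeal {n : ℕ} (i : Fin n) : Ideal (iwahori R n) where
  carrier := {M | (M : Matrix (Fin n) (Fin n) R) i i ∈ maximalIdeal R}
  zero_mem' := by simp
  add_mem' := by
    intro a b ha hb
    show ((a + b : iwahori R n) : Matrix (Fin n) (Fin n) R) i i ∈ maximalIdeal R
    rw [show ((a + b : iwahori R n) : Matrix (Fin n) (Fin n) R)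
      = (a : Matrix (Fin n) (Fin n) R) + b from rfl, Matrix.add_apply]
    exact add_mem ha hb
  smul_mem' := by
    intro c x hx
    show ((c : Matrix (Fin n) (Fin n) R) * x) i i ∈ maximalIdeal R
    rw [Matrix.mul_apply]
    refine Submodule.sum_mem _ fun k _ => ?_
    rcases lt_trichotomy (k : ℕ) (i : ℕ) with hk | hk | hk
    · exact Ideal.mul_mem_right _ _ (c.2 i k hk)
    · have : k = i := Fin.ext hk
      subst this
      exact Ideal.mul_mem_left _ _ hx
    · exact Ideal.mul_mem_left _ _ (x.2 k i hk)

lemma mem_diagIdeal {n : ℕ} {i : Fin n} {M : iwahori R n} :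
    M ∈ diagIdeal i ↔ (M : Matrix (Fin n) (Fin n) R) i i ∈ maximalIdeal R := Iff.rfl

lemma diagIdeal_isMaximal {n : ℕ} (i : Fin n) :
    (diagIdeal i : Ideal (iwahori R n)).IsMaximal := by
  rw [Ideal.isMaximal_iff]
  constructor
  · rw [mem_diagIdeal]
    rw [show (((1 : iwahori R n)) : Matrix (Fin n) (Fin n) R) = 1 from rfl, Matrix.one_apply_eq]
    intro h1
    exact (maximalIdeal.isMaximal R).ne_top ((Ideal.eq_top_iff_one _).mpr h1)
  · intro b y hle hy hyb
    rw [mem_diagIdeal] at hy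
    have hu : IsUnit ((y : Matrix (Fin n) (Fin n) R) i i) := notMem_maximalIdeal.mp hy
    set v : R := ((hu.unit⁻¹ : Rˣ) : R) with hv
    set a : Matrix (Fin n) (Fin n) R :=
      Matrix.of fun p q => if p = i ∧ q = i then v else 0 with hadef
    have haux : ∀ (N : Matrix (Fin n) (Fin n) R) (p q : Fin n),
        (a * N) p q = if p = i then v * N i q else 0 := by
      intro N p q
      rw [Matrix.mul_apply]
      by_cases hp : p = i
      · subst hp
        rw [if_pos rfl, Finset.sum_eq_single p]
        · rw [hadef, Matrix.of_apply, if_pos ⟨rfl, rfl⟩]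
        · intro k _ hk
          rw [hadef, Matrix.of_apply, if_neg (by rintro ⟨_, rfl⟩; exact hk rfl), zero_mul]
        · intro h'; exact absurd (Finset.mem_univ _) h'
      · rw [if_neg hp]
        refine Finset.sum_eq_zero fun k _ => ?_
        rw [hadef, Matrix.of_apply, if_neg (by rintro ⟨h1, _⟩; exact hp h1), zero_mul]
    have ha𝔦 : a ∈ iwahori R n := by
      intro p q hqp
      rw [hadef, Matrix.of_apply, if_neg (by rintro ⟨rfl, rfl⟩; exact lt_irrefl _ hqp)]
      exact zero_mem _
    set ai : iwahori R n := ⟨a, ha𝔦⟩ with hai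
    have hm : (1 : iwahori R n) - ai * y ∈ diagIdeal i := by
      rw [mem_diagIdeal]
      rw [show ((1 - ai * y : iwahori R n) : Matrix (Fin n) (Fin n) R)
        = 1 - a * (y : Matrix (Fin n) (Fin n) R) from rfl,
        Matrix.sub_apply, Matrix.one_apply_eq, haux, if_pos rfl]
      rw [show v * (y : Matrix (Fin n) (Fin n) R) i i = 1 from by
        rw [← hu.unit_spec, hv]; exact Units.inv_mul _]
      simp
    have h1 : (1 : iwahori R n) = (1 - ai * y) + ai * y := by abel
    rw [h1]
    exact b.add_mem (hle hm) (b.smul_mem ai hyb)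

variable (R)

/-- `Π·𝔦 = 𝔦·Π`; this common set is the two-sided ideal of `𝔦` of
matrices in `𝔦` whose entries on or below the diagonal lie in `𝔪`, and it equals the
Jacobson radical of the ring `𝔦` (the intersection of all maximal left ideals of `𝔦`). -/
theorem piMat_mul_iwahori (ϖ : R) (hϖ : Ideal.span {ϖ} = maximalIdeal R)
    (n : ℕ) (hn : 1 ≤ n) :
    ((fun x => PiMat R ϖ n * x) '' (iwahori R n : Set (Matrix (Fin n) (Fin n) R)) =
      (fun x => x * PiMat R ϖ n) '' (iwahori R n : Set (Matrix (Fin n) (Fin n) R))) ∧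
    ((fun x => PiMat R ϖ n * x) '' (iwahori R n : Set (Matrix (Fin n) (Fin n) R)) =
      {M : Matrix (Fin n) (Fin n) R | M ∈ iwahori R n ∧
        ∀ i j : Fin n, (j : ℕ) ≤ (i : ℕ) → M i j ∈ maximalIdeal R}) ∧
    (∀ a ∈ iwahori R n,
      ∀ x ∈ (fun y => PiMat R ϖ n * y) '' (iwahori R n : Set (Matrix (Fin n) (Fin n) R)),
        a * x ∈ (fun y => PiMat R ϖ n * y) '' (iwahori R n : Set (Matrix (Fin n) (Fin n) R)) ∧
        x * a ∈ (fun y => PiMat R ϖ n * y) '' (iwahori R n : Set (Matrix (Fin n) (Fin n) R))) ∧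
    (∀ x : iwahori R n,
      x ∈ sInf {J : Ideal (iwahori R n) | J.IsMaximal} ↔
        (x : Matrix (Fin n) (Fin n) R) ∈
          (fun y => PiMat R ϖ n * y) '' (iwahori R n : Set (Matrix (Fin n) (Fin n) R))) := by
  have himg := piMat_mul_image ϖ hϖ n hn
  have himg' := mul_piMat_image ϖ hϖ n hn
  have hset : ({M : Matrix (Fin n) (Fin n) R | M ∈ iwahori R n ∧
      ∀ i j : Fin n, (j : ℕ) ≤ (i : ℕ) → M i j ∈ maximalIdeal R}) =
      {M : Matrix (Fin n) (Fin n) R | ∀ i j : Fin n, (j : ℕ) ≤ (i : ℕ) →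
        M i j ∈ maximalIdeal R} := by
    ext M
    constructor
    · rintro ⟨_, h⟩; exact h
    · intro h; exact ⟨fun i j hij => h i j hij.le, h⟩
  refine ⟨himg.trans himg'.symm, himg.trans hset.symm, ?_, ?_⟩
  · intro a ha x hx
    rw [himg] at hx ⊢
    exact ⟨memS_mul_left ha hx, memS_mul_right ha hx⟩
  · intro x
    rw [himg]
    constructor
    · intro hx i j hji
      rcases eq_or_lt_of_le hji with heq | hlt
      · have hd := Submodule.mem_sInf.mp hx (diagIdeal i) (diagIdeal_isMaximal i)
        rw [mem_diagIdeal] at hd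
        rw [show j = i from Fin.ext heq]
        exact hd
      · exact x.2 i j hlt
    · intro hx
      rw [Submodule.mem_sInf]
      intro J hJ
      by_contra hxJ
      have hlt : J < J ⊔ Ideal.span {x} := lt_of_le_of_ne le_sup_left fun h =>
        hxJ (h ▸ Submodule.mem_sup_right (Ideal.subset_span (Set.mem_singleton x)))
      have htop : J ⊔ Ideal.span {x} = ⊤ := hJ.out.out.2 _ hlt
      have h1 : (1 : iwahori R n) ∈ J ⊔ Ideal.span {x} := htop ▸ Submodule.mem_top
      obtain ⟨m, hm, y, hy, hmy⟩ := Submodule.mem_sup.mp h1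
      obtain ⟨aa, rfl⟩ := Submodule.mem_span_singleton.mp hy
      rw [smul_eq_mul] at hmy
      have hax : ∀ i j : Fin n, (j : ℕ) ≤ (i : ℕ) →
          ((aa * x : iwahori R n) : Matrix (Fin n) (Fin n) R) i j ∈ maximalIdeal R := by
        intro i j hji
        exact memS_mul_left aa.2 hx i j hji
      obtain ⟨B, hB, hB1, hB2⟩ := one_sub_isUnit hn hax
      have hmeq : m = 1 - aa * x := by
        rw [← hmy]; abel
      have hBm : (⟨B, hB⟩ : iwahori R n) * m = 1 := by
        apply Subtype.ext
        show B * (m : Matrix (Fin n) (Fin n) R) = 1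
        rw [hmeq]
        rw [show ((1 - aa * x : iwahori R n) : Matrix (Fin n) (Fin n) R)
          = 1 - ((aa * x : iwahori R n) : Matrix (Fin n) (Fin n) R) from rfl]
        exact hB1
      have hone : (1 : iwahori R n) ∈ J := hBm ▸ J.smul_mem _ hm
      exact hJ.ne_top ((Ideal.eq_top_iff_one J).mpr hone)
end

section
/- Let n ≥ 1 and g ∈ GLₙ(F). Then g·Matₙ(R)·g⁻¹ = Matₙ(R) (equality of subsets of Matₙ(F)) if and only if there exist m ∈ ℤ and u ∈ GLₙ(R) with g = ϖ^m·u. -/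
open IsLocalRing

/-- `g ∈ GLₙ(F)` normalizes `Matₙ(R)` if and only if `g = ϖ^m · u`
for some `m ∈ ℤ` and `u ∈ GLₙ(R)`. -/
theorem normalizer_matR_eq
    (R : Type*) [CommRing R] [IsDomain R] [IsDiscreteValuationRing R]
    (F : Type*) [Field F] [Algebra R F] [IsFractionRing R F]
    (ϖ : R) (hϖ : Ideal.span {ϖ} = maximalIdeal R)
    (n : ℕ) (hn : 1 ≤ n) (g : GL (Fin n) F) :
    ((fun a => (g : Matrix (Fin n) (Fin n) F) * a *
          ((g⁻¹ : GL (Fin n) F) : Matrix (Fin n) (Fin n) F)) ''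
        {a : Matrix (Fin n) (Fin n) F | ∀ i j : Fin n, ∃ r : R, a i j = algebraMap R F r} =
      {a : Matrix (Fin n) (Fin n) F | ∀ i j : Fin n, ∃ r : R, a i j = algebraMap R F r}) ↔
    ∃ m : ℤ, ∃ u v : Matrix (Fin n) (Fin n) R, u * v = 1 ∧ v * u = 1 ∧
      (g : Matrix (Fin n) (Fin n) F) =
        (algebraMap R F ϖ) ^ m • (u.map (algebraMap R F)) := by
  classical
  set A := algebraMap R F with hA
  have hinj : Function.Injective A := IsFractionRing.injective R F
  have hϖ0 : ϖ ≠ 0 := by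
    intro h0
    apply IsDiscreteValuationRing.not_a_field R
    rw [← hϖ, h0, Ideal.span_singleton_eq_bot]
  have hirr : Irreducible ϖ := IsDiscreteValuationRing.irreducible_of_span_eq_maximalIdeal ϖ hϖ0 hϖ.symm
  set π := A ϖ with hπdef
  have hπ0 : π ≠ 0 := fun h => hϖ0 (hinj (by simpa using h))
  set gm := (g : Matrix (Fin n) (Fin n) F) with hgm
  set gi := ((g⁻¹ : GL (Fin n) F) : Matrix (Fin n) (Fin n) F) with hgi
  have hgh : gm * gi = 1 := by
    rw [hgm, hgi, ← Units.val_mul, mul_inv_cancel, Units.val_one]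
  have hhg : gi * gm = 1 := by
    rw [hgm, hgi, ← Units.val_mul, inv_mul_cancel, Units.val_one]
  have lemA : ∀ x : F, x ≠ 0 → ∃ m : ℤ, ∃ w : Rˣ, x = A ↑w * π ^ m := by
    intro x hx
    obtain ⟨r, s, hs, hsr⟩ := IsFractionRing.div_surjective (A := R) x
    have hs0 : s ≠ 0 := nonZeroDivisors.ne_zero hs
    have hr0 : r ≠ 0 := by
      rintro rfl; apply hx; rw [← hsr]; simp
    obtain ⟨k1, u1, hu1⟩ := IsDiscreteValuationRing.eq_unit_mul_pow_irreducible hr0 hirr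
    obtain ⟨k2, u2, hu2⟩ := IsDiscreteValuationRing.eq_unit_mul_pow_irreducible hs0 hirr
    refine ⟨(k1 : ℤ) - k2, u1 * u2⁻¹, ?_⟩
    have hAs : A s ≠ 0 := fun h => hs0 (hinj (by simpa using h))
    have hu2F : A ↑u2 ≠ 0 := by
      intro h
      exact (u2.isUnit.map A).ne_zero h
    have hAs2 : A (↑u2 * ϖ ^ k2) ≠ 0 := by rw [← hu2]; exact hAs
    rw [← hsr, hu1, hu2, div_eq_iff hAs2]
    have hzz : π ^ ((k1:ℤ) - k2) * π ^ (k2 : ℤ) = π ^ (k1 : ℤ) := by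
      rw [← zpow_add₀ hπ0]; ring_nf
    have hu2inv : A ↑(u2⁻¹) * A ↑u2 = 1 := by
      rw [← map_mul]; simp
    refine Eq.symm ?_
    calc A ↑(u1 * u2⁻¹) * π ^ ((k1:ℤ) - k2) * A (↑u2 * ϖ ^ k2)
        = A ↑u1 * (A ↑(u2⁻¹) * A ↑u2) * (π ^ ((k1:ℤ) - k2) * π ^ (k2:ℤ)) := by
          push_cast [map_mul, map_pow]
          rw [← hπdef, zpow_natCast]; ring
      _ = A ↑u1 * π ^ (k1 : ℤ) := by rw [hu2inv, hzz, mul_one]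
      _ = A (↑u1 * ϖ ^ k1) := by rw [map_mul, map_pow, ← hπdef, zpow_natCast]
  constructor
  · -- forward
    intro Heq
    have Hsub : ∀ a : Matrix (Fin n) (Fin n) F, (∀ i j, ∃ r : R, a i j = A r) →
        ∀ i j, ∃ r : R, (gm * a * gi) i j = A r := by
      intro a ha
      have : gm * a * gi ∈
          {a : Matrix (Fin n) (Fin n) F | ∀ i j : Fin n, ∃ r : R, a i j = A r} := by
        rw [← Heq]; exact Set.mem_image_of_mem _ ha
      exact this
    -- a nonzero entry exists
    have i0 : Fin n := ⟨0, hn⟩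
    have hg0 : ∃ p : Fin n × Fin n, gm p.1 p.2 ≠ 0 := by
      by_contra hc
      push_neg at hc
      have : gm = 0 := by ext i j; exact hc (i, j)
      have h1 : (1 : Matrix (Fin n) (Fin n) F) = 0 := by rw [← hgh, this, zero_mul]
      have := congrFun (congrFun h1 i0) i0
      simp at this
    set S := Finset.univ.filter (fun p : Fin n × Fin n => gm p.1 p.2 ≠ 0) with hS
    have hSne : S.Nonempty := by
      obtain ⟨p, hp⟩ := hg0
      exact ⟨p, by simp [hS, hp]⟩
    set val : Fin n × Fin n → ℤ := fun p =>
      if h : gm p.1 p.2 ≠ 0 then (lemA _ h).choose else 0 with hval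
    set m := (S.image val).min' (hSne.image val) with hm
    obtain ⟨p0, hp0S, hvalp0⟩ := Finset.mem_image.mp ((S.image val).min'_mem (hSne.image val))
    have hmin : ∀ p ∈ S, m ≤ val p := fun p hp =>
      Finset.min'_le _ _ (Finset.mem_image_of_mem val hp)
    have hvspec : ∀ p (h : gm p.1 p.2 ≠ 0), ∃ w : Rˣ, gm p.1 p.2 = A ↑w * π ^ val p := by
      intro p h
      have : val p = (lemA _ h).choose := by rw [hval]; simp [h]
      rw [this]
      exact (lemA _ h).choose_spec
    have hu : ∀ i j, ∃ r : R, gm i j = π ^ m * A r := by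
      intro i j
      by_cases hij : gm (i, j).1 (i, j).2 ≠ 0
      · obtain ⟨w, hw⟩ := hvspec (i, j) hij
        have hpS : (i, j) ∈ S := by simp [hS, hij]
        have hle := hmin _ hpS
        set k := (val (i, j) - m).toNat with hk
        have hkk : (k : ℤ) = val (i, j) - m := Int.toNat_of_nonneg (by omega)
        refine ⟨↑w * ϖ ^ k, ?_⟩
        rw [hw, map_mul, map_pow, ← hπdef]
        rw [show val (i, j) = m + (k : ℤ) by omega, zpow_add₀ hπ0, ← zpow_natCast π k]
        ring
      · push_neg at hij
        exact ⟨0, by simp [hij]⟩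
    set u : Matrix (Fin n) (Fin n) R := Matrix.of (fun i j => (hu i j).choose) with hudef
    have hgu : gm = π ^ m • u.map A := by
      ext i j
      rw [Matrix.smul_apply, Matrix.map_apply]
      exact (hu i j).choose_spec
    -- the minimal entry
    have hp0ne : gm p0.1 p0.2 ≠ 0 := by
      rw [hS] at hp0S; simpa using hp0S
    obtain ⟨w0, hw0⟩ := hvspec p0 hp0ne
    rw [hvalp0] at hw0
    have hw0inv : A ↑(w0⁻¹) * A ↑w0 = 1 := by rw [← map_mul]; simp
    have hv : ∀ l j, ∃ r : R, π ^ m * gi l j = A r := by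
      intro l j
      set a := Matrix.single p0.2 l (1 : F) with ha
      have haR : ∀ i j, ∃ r : R, a i j = A r := by
        intro i j
        rw [ha, Matrix.single]
        by_cases h : p0.2 = i ∧ l = j
        · exact ⟨1, by simp [h.1, h.2]⟩
        · refine ⟨0, ?_⟩
          simp only [Matrix.of_apply]
          rw [if_neg h, map_zero]
      obtain ⟨r, hr⟩ := Hsub a haR p0.1 j
      have hentry : (gm * a * gi) p0.1 j = gm p0.1 p0.2 * gi l j := by
        rw [Matrix.mul_apply]
        refine (Finset.sum_eq_single l ?_ ?_).trans ?_
        · intro b _ hb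
          rw [Matrix.mul_single_apply_of_ne (hbj := hb), zero_mul]
        · intro h; exact absurd (Finset.mem_univ l) h
        · rw [Matrix.mul_single_apply_same, mul_one]
      rw [hentry, hw0] at hr
      refine ⟨↑(w0⁻¹) * r, ?_⟩
      calc π ^ m * gi l j = (A ↑(w0⁻¹) * A ↑w0) * (π ^ m * gi l j) := by
            rw [hw0inv, one_mul]
        _ = A ↑(w0⁻¹) * (A ↑w0 * π ^ m * gi l j) := by ring
        _ = A ↑(w0⁻¹) * A r := by rw [hr]
        _ = A (↑(w0⁻¹) * r) := (map_mul A _ _).symm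
    set v : Matrix (Fin n) (Fin n) R := Matrix.of (fun l j => (hv l j).choose) with hvdef
    have hπm : (π : F) ^ m ≠ 0 := zpow_ne_zero _ hπ0
    have hgv : v.map A = π ^ m • gi := by
      ext l j
      rw [Matrix.smul_apply, Matrix.map_apply]
      exact ((hv l j).choose_spec).symm
    have humap : u.map A = π ^ (-m) • gm := by
      rw [hgu, smul_smul, zpow_neg, inv_mul_cancel₀ hπm, one_smul]
    have hmapinj : ∀ x y : Matrix (Fin n) (Fin n) R, x.map A = y.map A → x = y := by
      intro x y hxy
      ext i j
      exact hinj (by simpa [Matrix.map_apply] using congrFun (congrFun hxy i) j)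
    have huv : u * v = 1 := by
      apply hmapinj
      rw [Matrix.map_mul, humap, hgv, Matrix.smul_mul, Matrix.mul_smul, smul_smul,
        zpow_neg, inv_mul_cancel₀ hπm, hgh, one_smul]
      exact (Matrix.map_one A (map_zero A) (map_one A)).symm
    have hvu : v * u = 1 := by
      apply hmapinj
      rw [Matrix.map_mul, humap, hgv, Matrix.smul_mul, Matrix.mul_smul, smul_smul,
        zpow_neg, mul_inv_cancel₀ hπm, hhg, one_smul]
      exact (Matrix.map_one A (map_zero A) (map_one A)).symm
    exact ⟨m, u, v, huv, hvu, hgu⟩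
  · -- backward
    rintro ⟨m, u, v, huv, hvu, hgu⟩
    set U := u.map A with hU
    set V := v.map A with hV
    set c := π ^ m with hc
    have hc0 : c ≠ 0 := zpow_ne_zero _ hπ0
    have hUV : U * V = 1 := by
      rw [hU, hV, ← Matrix.map_mul, huv]
      exact Matrix.map_one A (map_zero A) (map_one A)
    have hVU : V * U = 1 := by
      rw [hU, hV, ← Matrix.map_mul, hvu]
      exact Matrix.map_one A (map_zero A) (map_one A)
    have hginv : gi = c⁻¹ • V := by
      have h1 : gm * (c⁻¹ • V) = 1 := by
        rw [hgu, Matrix.smul_mul, Matrix.mul_smul, smul_smul, mul_inv_cancel₀ hc0,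
          one_smul, hUV]
      calc gi = gi * (gm * (c⁻¹ • V)) := by rw [h1, mul_one]
        _ = (gi * gm) * (c⁻¹ • V) := (mul_assoc _ _ _).symm
        _ = c⁻¹ • V := by rw [hhg, one_mul]
    ext a
    simp only [Set.mem_image, Set.mem_setOf_eq]
    constructor
    · rintro ⟨b, hb, rfl⟩
      choose b' hb' using hb
      have hbeq : b = (Matrix.of b').map A := by
        ext i j; rw [Matrix.map_apply]; exact hb' i j
      have hkey : gm * b * gi = (u * Matrix.of b' * v).map A := by
        rw [hginv, hgu, hbeq, Matrix.map_mul, Matrix.map_mul, ← hU, ← hV,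
          Matrix.smul_mul, Matrix.smul_mul, Matrix.mul_smul, smul_smul,
          mul_inv_cancel₀ hc0, one_smul]
      intro i j
      exact ⟨(u * Matrix.of b' * v) i j, by rw [hkey]; rfl⟩
    · intro ha
      choose a' ha' using ha
      have haeq : a = (Matrix.of a').map A := by
        ext i j; rw [Matrix.map_apply]; exact ha' i j
      refine ⟨(v * Matrix.of a' * u).map A, fun i j => ⟨(v * Matrix.of a' * u) i j, rfl⟩, ?_⟩
      have hmid : (v * Matrix.of a' * u).map A = V * a * U := by
        rw [Matrix.map_mul, Matrix.map_mul, ← hU, ← hV, haeq]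
      rw [hmid, hginv, hgu, Matrix.smul_mul, Matrix.mul_smul, Matrix.smul_mul,
        smul_smul, inv_mul_cancel₀ hc0, one_smul]
      calc U * (V * a * U) * V = (U * V) * a * (U * V) := by noncomm_ring
        _ = a := by rw [hUV, one_mul, mul_one]
end

section
/- For every integer n ≥ 1 and every B ∈ U_𝔦, the characteristic polynomial of the matrix Π·B ∈ Matₙ(R) is Eisenstein. -/
open IsLocalRing

variable (R : Type*) [CommRing R] [IsDomain R] [IsDiscreteValuationRing R]

/-- The Iwahori order `𝔦`, as a set: matrices over `R` whose entries strictly below the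
diagonal lie in the maximal ideal `𝔪`. -/
def iw (n : ℕ) : Set (Matrix (Fin n) (Fin n) R) :=
  {M | ∀ i j : Fin n, (j : ℕ) < (i : ℕ) → M i j ∈ maximalIdeal R}

/-- The unit group `U_𝔦` of the Iwahori order: matrices `u ∈ 𝔦` invertible with
inverse in `𝔦`. -/
def Uiw (n : ℕ) : Set (Matrix (Fin n) (Fin n) R) :=
  {u | u ∈ iw R n ∧ ∃ v ∈ iw R n, u * v = 1 ∧ v * u = 1}

/-- A monic polynomial `x^n + a_{n-1}x^{n-1} + ⋯ + a_0 ∈ R[x]` is Eisenstein if all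
lower coefficients lie in `𝔪` and the constant coefficient is not in `𝔪²`. -/
def IsEisensteinPoly (f : Polynomial R) : Prop :=
  f.Monic ∧ (∀ i < f.natDegree, f.coeff i ∈ maximalIdeal R) ∧
    f.coeff 0 ∉ (maximalIdeal R) ^ 2

open Polynomial Matrix in
/-- Factorization of `Π` as a diagonal matrix times a permutation matrix. -/
lemma piMat_factor (ϖ : R) (m : ℕ) :
    PiMat R ϖ (m + 1) =
      Matrix.diagonal (fun i : Fin (m + 1) => if (i : ℕ) = m then ϖ else 1) *
        ((finRotate (m + 1)).permMatrix R) := by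
  ext i j
  rw [Matrix.diagonal_mul]
  simp only [PiMat, Matrix.of_apply, Equiv.Perm.permMatrix, PEquiv.toMatrix_apply,
    Equiv.toPEquiv_apply, Option.mem_def, Option.some.injEq, finRotate_succ_apply,
    Fin.ext_iff, Fin.val_add_one, Fin.val_last, Nat.add_sub_cancel]
  have hi := i.isLt
  have hj := j.isLt
  split_ifs
  all_goals try ring
  all_goals exfalso; omega

open Polynomial Matrix in
/-- For every `n ≥ 1` and every `B ∈ U_𝔦`, the characteristic
polynomial of `Π·B` is Eisenstein (of degree `n`). -/
theorem charpoly_piMat_mul_isEisenstein (ϖ : R) (hϖ : Ideal.span {ϖ} = maximalIdeal R)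
    (n : ℕ) (hn : 1 ≤ n) (B : Matrix (Fin n) (Fin n) R) (hB : B ∈ Uiw R n) :
    IsEisensteinPoly R (PiMat R ϖ n * B).charpoly ∧
      (PiMat R ϖ n * B).charpoly.natDegree = n := by
  obtain ⟨m, rfl⟩ : ∃ m, n = m + 1 := ⟨n - 1, by omega⟩
  obtain ⟨hBiw, v, hviw, hBv, hvB⟩ := hB
  set M : Matrix (Fin (m + 1)) (Fin (m + 1)) R := PiMat R ϖ (m + 1) * B with hM
  have hϖmem : ϖ ∈ maximalIdeal R := hϖ ▸ Ideal.mem_span_singleton_self ϖ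
  have hdeg : M.charpoly.natDegree = m + 1 := by
    rw [Matrix.charpoly_natDegree_eq_dim, Fintype.card_fin]
  -- the entries M i j with j ≤ i all lie in the maximal ideal
  have hMlow : ∀ i j : Fin (m + 1), (j : ℕ) ≤ (i : ℕ) → M i j ∈ maximalIdeal R := by
    intro i j hij
    have hfac : M = Matrix.diagonal (fun i : Fin (m + 1) => if (i : ℕ) = m then ϖ else 1) *
        (B.submatrix (finRotate (m + 1)) id) := by
      rw [hM, piMat_factor, Matrix.mul_assoc, Equiv.Perm.permMatrix,
        PEquiv.toMatrix_toPEquiv_mul]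
    rw [hfac, Matrix.diagonal_mul]
    by_cases hi : (i : ℕ) = m
    · rw [if_pos hi]
      exact Ideal.mul_mem_right _ _ hϖmem
    · rw [if_neg hi, one_mul, Matrix.submatrix_apply, id]
      apply hBiw
      rw [coe_finRotate, if_neg (fun h => hi (by rw [h, Fin.val_last]))]
      omega
  -- reduction mod the maximal ideal
  have hmap : M.charpoly.map (Ideal.Quotient.mk (maximalIdeal R)) = X ^ (m + 1) := by
    rw [← Matrix.charpoly_map]
    set Mbar := M.map (Ideal.Quotient.mk (maximalIdeal R)) with hMbar
    have hzero : ∀ i j : Fin (m + 1), (j : ℕ) ≤ (i : ℕ) → Mbar i j = 0 := by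
      intro i j hij
      rw [hMbar, Matrix.map_apply, Ideal.Quotient.eq_zero_iff_mem]
      exact hMlow i j hij
    have htri : (Matrix.charmatrix Mbar).BlockTriangular id := by
      intro i j hij
      rw [Matrix.charmatrix_apply_ne _ _ _ (show i ≠ j from hij.ne'),
        hzero i j (le_of_lt hij), map_zero, neg_zero]
    rw [Matrix.charpoly, Matrix.det_of_upperTriangular htri]
    have hdiag : ∀ i : Fin (m + 1), Matrix.charmatrix Mbar i i = X := by
      intro i
      rw [Matrix.charmatrix_apply_eq, hzero i i le_rfl, map_zero, sub_zero]
    rw [Finset.prod_congr rfl (fun i _ => hdiag i)]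
    simp
  have hcoeff : ∀ i < m + 1, M.charpoly.coeff i ∈ maximalIdeal R := by
    intro i hi
    rw [← Ideal.Quotient.eq_zero_iff_mem, ← Polynomial.coeff_map, hmap,
      Polynomial.coeff_X_pow, if_neg (by omega)]
  -- determinant computation
  have hdetB : B.det * v.det = 1 := by rw [← Matrix.det_mul, hBv, Matrix.det_one]
  have hsq : ((-1 : R) ^ m) * ((-1 : R) ^ m) = 1 := by
    rw [← pow_add, ← two_mul, pow_mul, neg_one_sq, one_pow]
  have hdetPi : (PiMat R ϖ (m + 1)).det = ϖ * (-1 : R) ^ m := by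
    rw [piMat_factor, Matrix.det_mul, Matrix.det_diagonal, Matrix.det_permutation,
      sign_finRotate]
    have hprod : (∏ i : Fin (m + 1), if (i : ℕ) = m then ϖ else 1) = ϖ := by
      rw [Finset.prod_eq_single (Fin.last m)]
      · simp
      · intro b _ hb
        rw [if_neg (fun h => hb (Fin.ext (by rw [h, Fin.val_last])))]
      · intro h; exact absurd (Finset.mem_univ _) h
    rw [hprod]
    push_cast
    ring
  have hdetM : M.det = ϖ * (-1 : R) ^ m * B.det := by
    rw [hM, Matrix.det_mul, hdetPi]
  -- constant coefficient not in 𝔪²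
  have hconst : M.charpoly.coeff 0 ∉ (maximalIdeal R) ^ 2 := by
    intro hmem
    have hdet' : M.det = (-1) ^ (m + 1) * M.charpoly.coeff 0 := by
      have := Matrix.det_eq_sign_charpoly_coeff M
      rwa [Fintype.card_fin] at this
    have h1 : ϖ * ((-1 : R) ^ m * B.det) = (-1) ^ (m + 1) * M.charpoly.coeff 0 := by
      rw [← hdet', hdetM]; ring
    have hϖeq : ϖ = -(M.charpoly.coeff 0 * v.det) := by
      calc ϖ = ϖ * ((-1 : R) ^ m * B.det) * ((-1 : R) ^ m * v.det) := by
              have : ϖ * ((-1 : R) ^ m * B.det) * ((-1 : R) ^ m * v.det)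
                  = ϖ * ((((-1 : R) ^ m) * ((-1 : R) ^ m)) * (B.det * v.det)) := by ring
              rw [this, hsq, hdetB, one_mul, mul_one]
        _ = (-1) ^ (m + 1) * M.charpoly.coeff 0 * ((-1 : R) ^ m * v.det) := by rw [h1]
        _ = -(M.charpoly.coeff 0 * v.det) * (((-1 : R) ^ m) * ((-1 : R) ^ m)) := by ring
        _ = -(M.charpoly.coeff 0 * v.det) := by rw [hsq, mul_one]
    have hmem2 : ϖ ∈ (maximalIdeal R) ^ 2 := by
      rw [hϖeq]
      exact neg_mem (Ideal.mul_mem_right _ _ hmem)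
    have hϖne : ϖ ≠ 0 := by
      intro h
      apply IsDiscreteValuationRing.not_a_field R
      rw [← hϖ, h, Ideal.span_singleton_eq_bot]
    rw [← hϖ, Ideal.span_singleton_pow, Ideal.mem_span_singleton] at hmem2
    obtain ⟨c, hc⟩ := hmem2
    have hmc : ϖ * 1 = ϖ * (ϖ * c) := by rw [mul_one, ← mul_assoc, ← pow_two, ← hc]
    have h1' : (1 : R) = ϖ * c := mul_left_cancel₀ hϖne hmc
    exact (IsLocalRing.mem_maximalIdeal ϖ).mp hϖmem
      (IsUnit.of_mul_eq_one c h1'.symm)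
  refine ⟨⟨Matrix.charpoly_monic M, ?_, hconst⟩, hdeg⟩
  intro i hi
  rw [hdeg] at hi
  exact hcoeff i hi
end

section
/- Let n ≥ 1 and let M ∈ Matₙ(R) be a matrix whose characteristic polynomial is Eisenstein. Then there exist h ∈ GLₙ(R) and B ∈ U_𝔦 such that h⁻¹·M·h = Π·B. -/
open IsLocalRing

variable (R : Type*) [CommRing R] [IsDomain R] [IsDiscreteValuationRing R]

attribute [-simp] Fin.val_eq_zero_iff

/-- A matrix over `R` whose characteristic polynomial is Eisenstein is
`GLₙ(R)`-conjugate to `Π·B` for some `B ∈ U_𝔦`. -/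
theorem eisenstein_conjugate_to_piMat_mul (ϖ : R) (hϖ : Ideal.span {ϖ} = maximalIdeal R)
    (n : ℕ) (hn : 1 ≤ n) (M : Matrix (Fin n) (Fin n) R)
    (hM : IsEisensteinPoly R M.charpoly) :
    ∃ h hinv : Matrix (Fin n) (Fin n) R, h * hinv = 1 ∧ hinv * h = 1 ∧
      ∃ B ∈ Uiw R n, hinv * M * h = PiMat R ϖ n * B := by
  classical
  obtain ⟨m, rfl⟩ : ∃ m, n = m + 1 := ⟨n - 1, by omega⟩
  obtain ⟨hmon, hlow, h0⟩ := hM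
  set f := M.charpoly with hfdef
  have hdeg : f.natDegree = m + 1 := by
    rw [hfdef, Matrix.charpoly_natDegree_eq_dim, Fintype.card_fin]
  have h0m : f.coeff 0 ∈ maximalIdeal R := hlow 0 (by omega)
  rw [← hϖ] at h0m
  obtain ⟨d, hd⟩ := Ideal.mem_span_singleton'.mp h0m
  -- hd : d * ϖ = f.coeff 0
  have hdu : IsUnit d := by
    by_contra hnd
    have hdm : d ∈ maximalIdeal R := (mem_maximalIdeal d).mpr (mem_nonunits_iff.mpr hnd)
    rw [← hϖ] at hdm
    obtain ⟨e, he⟩ := Ideal.mem_span_singleton'.mp hdm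
    apply h0
    have hsq : (maximalIdeal R) ^ 2 = Ideal.span {ϖ ^ 2} := by
      rw [← hϖ, Ideal.span_singleton_pow]
    rw [hsq]
    exact Ideal.mem_span_singleton'.mpr ⟨e, by rw [← hd, ← he]; ring⟩
  have hϖ0 : ϖ ≠ 0 := by
    intro hz
    apply h0
    rw [← hd, hz, mul_zero]
    exact zero_mem _
  have hfn : f.coeff (m + 1) = 1 := by
    have := hmon.coeff_natDegree
    rwa [hdeg] at this
  -- Cayley–Hamilton
  have hCH : M ^ (m + 1) = -∑ t ∈ Finset.range (m + 1), f.coeff t • M ^ t := by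
    have h := M.aeval_self_charpoly
    rw [Polynomial.aeval_eq_sum_range] at h
    rw [← hfdef, hdeg, Finset.sum_range_succ, hfn, one_smul] at h
    exact eq_neg_of_add_eq_zero_right h
  set Mb := M.map (residue R) with hMbdef
  have hmapow : ∀ k : ℕ, (M ^ k).map (residue R) = Mb ^ k := by
    intro k
    have := map_pow ((residue R).mapMatrix) M k
    simpa [RingHom.mapMatrix_apply] using this
  have hMbn : Mb ^ (m + 1) = 0 := by
    rw [← hmapow, hCH]
    ext i j
    have hent : ((-∑ t ∈ Finset.range (m+1), f.coeff t • M ^ t) : Matrix _ _ R) i j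
        = -∑ t ∈ Finset.range (m+1), f.coeff t * (M ^ t) i j := by
      simp [Matrix.sum_apply, Matrix.smul_apply, smul_eq_mul]
    rw [Matrix.map_apply, hent, map_neg, map_sum]
    have : ∀ t ∈ Finset.range (m+1), residue R (f.coeff t * (M ^ t) i j) = 0 := by
      intro t ht
      rw [map_mul]
      have : residue R (f.coeff t) = 0 :=
        Ideal.Quotient.eq_zero_iff_mem.mpr (hlow t (by rw [hdeg]; exact Finset.mem_range.mp ht))
      rw [this, zero_mul]
    rw [Finset.sum_congr rfl this]
    simp
  have hMbpred : Mb ^ m ≠ 0 := by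
    intro hz
    have hent : ∀ i j, (M ^ m) i j ∈ Ideal.span {ϖ} := by
      intro i j
      rw [hϖ]
      have h1 : residue R ((M ^ m) i j) = 0 := by
        have := congrFun (congrFun (hmapow m) i) j
        rw [hz] at this
        simpa [Matrix.map_apply] using this
      exact Ideal.Quotient.eq_zero_iff_mem.mp h1
    choose N hN using fun i j => Ideal.mem_span_singleton'.mp (hent i j)
    have hmat : M ^ m = ϖ • (Matrix.of N) := by
      ext i j
      rw [Matrix.smul_apply, Matrix.of_apply, smul_eq_mul, ← hN i j]
      ring
    have hdet1 : M.det ^ m = ϖ ^ (m + 1) * (Matrix.of N).det := by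
      rw [← Matrix.det_pow, hmat, Matrix.det_smul, Fintype.card_fin]
    have hdetM : M.det = (-1) ^ (m + 1) * (d * ϖ) := by
      rw [Matrix.det_eq_sign_charpoly_coeff, Fintype.card_fin, ← hfdef, ← hd]
    have hkey : ((-1 : R) ^ (m+1) * d) ^ m = ϖ * (Matrix.of N).det := by
      apply mul_left_cancel₀ (pow_ne_zero m hϖ0)
      calc ϖ ^ m * ((-1 : R) ^ (m+1) * d) ^ m = ((-1 : R) ^ (m+1) * (d * ϖ)) ^ m := by ring
        _ = M.det ^ m := by rw [← hdetM]
        _ = ϖ ^ (m + 1) * (Matrix.of N).det := hdet1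
        _ = ϖ ^ m * (ϖ * (Matrix.of N).det) := by ring
    have hunit : IsUnit (ϖ * (Matrix.of N).det) := by
      rw [← hkey]
      exact ((isUnit_one.neg.pow _).mul hdu).pow _
    have hmem : ϖ * (Matrix.of N).det ∈ maximalIdeal R := by
      rw [← hϖ]
      exact Ideal.mem_span_singleton'.mpr ⟨(Matrix.of N).det, mul_comm _ _⟩
    exact mem_nonunits_iff.mp ((mem_maximalIdeal _).mp hmem) hunit
  obtain ⟨i0, j0, hij⟩ : ∃ i0 j0, (Mb ^ m) i0 j0 ≠ 0 := by
    by_contra hco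
    push_neg at hco
    exact hMbpred (by ext i j; simpa using hco i j)
  set h : Matrix (Fin (m+1)) (Fin (m+1)) R :=
    Matrix.of (fun a i => (M ^ (m - (i : ℕ))) a j0) with hh
  have hhmap : h.map (residue R)
      = Matrix.of (fun a i : Fin (m+1) => (Mb ^ (m - (i : ℕ))) a j0) := by
    ext a i
    rw [Matrix.map_apply, hh, Matrix.of_apply, Matrix.of_apply]
    exact congrFun (congrFun (hmapow _) a) j0
  have hdetk : (h.map (residue R)).det ≠ 0 := by
    intro hz
    obtain ⟨c, hc0, hc⟩ := Matrix.exists_mulVec_eq_zero_iff.mpr hz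
    have hc' : ∀ a, ∑ i : Fin (m+1), (Mb ^ (m - (i : ℕ))) a j0 * c i = 0 := by
      intro a
      have := congrFun hc a
      rw [hhmap] at this
      simpa [Matrix.mulVec, dotProduct] using this
    have key : ∀ p : ℕ, ∀ a, ∑ i : Fin (m+1), (Mb ^ (p + (m - (i : ℕ)))) a j0 * c i = 0 := by
      intro p a
      calc ∑ i : Fin (m+1), (Mb ^ (p + (m - (i : ℕ)))) a j0 * c i
          = ∑ i : Fin (m+1), ∑ b, (Mb ^ p) a b * ((Mb ^ (m - (i : ℕ))) b j0 * c i) := by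
            refine Finset.sum_congr rfl fun i _ => ?_
            rw [pow_add, Matrix.mul_apply, Finset.sum_mul]
            exact Finset.sum_congr rfl fun b _ => by ring
        _ = ∑ b, (Mb ^ p) a b * ∑ i : Fin (m+1), (Mb ^ (m - (i : ℕ))) b j0 * c i := by
            rw [Finset.sum_comm]
            exact Finset.sum_congr rfl fun b _ => by rw [Finset.mul_sum]
        _ = 0 := by simp [hc']
    have hcz : ∀ i : Fin (m+1), c i = 0 := by
      have main : ∀ q : ℕ, ∀ i : Fin (m+1), (i : ℕ) + q = m → c i = 0 := by
        intro q
        induction q using Nat.strong_induction_on with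
        | _ q IH =>
          intro i hi
          have hk := key (i : ℕ) i0
          have hsingle : ∑ t : Fin (m+1), (Mb ^ ((i : ℕ) + (m - (t : ℕ)))) i0 j0 * c t
              = (Mb ^ m) i0 j0 * c i := by
            rw [Finset.sum_eq_single i]
            · rw [show (i : ℕ) + (m - (i : ℕ)) = m by omega]
            · intro t _ hti
              rcases lt_or_gt_of_ne (fun hc : (t : ℕ) = (i : ℕ) => hti (Fin.ext hc)) with hlt | hgt
              · have hexp : (i : ℕ) + (m - (t : ℕ)) = (m + 1) + ((i : ℕ) - (t : ℕ) - 1) := by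
                  have := t.isLt; omega
                rw [hexp, pow_add, hMbn, Matrix.zero_mul, Matrix.zero_apply, zero_mul]
              · have hct : c t = 0 := IH (m - (t : ℕ)) (by have := t.isLt; omega) t
                  (by have := t.isLt; omega)
                rw [hct, mul_zero]
            · intro hni; exact absurd (Finset.mem_univ i) hni
          rw [hsingle] at hk
          rcases mul_eq_zero.mp hk with hz' | hz'
          · exact absurd hz' hij
          · exact hz'
      intro i
      exact main (m - (i : ℕ)) i (by have := i.isLt; omega)
    exact hc0 (funext hcz)
  have hdetu : IsUnit h.det := by
    by_contra hnu
    apply hdetk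
    have hmem : h.det ∈ maximalIdeal R := (mem_maximalIdeal _).mpr (mem_nonunits_iff.mpr hnu)
    have : residue R h.det = 0 := Ideal.Quotient.eq_zero_iff_mem.mpr hmem
    rw [← this, RingHom.map_det, RingHom.mapMatrix_apply]
  -- the Iwahori unit B and its inverse V
  obtain ⟨du, hdueq⟩ := hdu
  set e : R := ((du⁻¹ : Rˣ) : R) with he
  have hde : d * e = 1 := by rw [← hdueq, he]; exact_mod_cast du.mul_inv
  set b : Fin (m+1) → R := fun i => if (i : ℕ) = 0 then -d else -f.coeff (m + 1 - (i : ℕ))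
    with hb
  set B : Matrix (Fin (m+1)) (Fin (m+1)) R :=
    Matrix.of (fun i j => if (j : ℕ) = 0 then b i else if i = j then 1 else 0) with hB
  set V : Matrix (Fin (m+1)) (Fin (m+1)) R :=
    Matrix.of (fun i j => if (j : ℕ) = 0 then
      (if (i : ℕ) = 0 then -e else -f.coeff (m + 1 - (i : ℕ)) * e)
      else if i = j then 1 else 0) with hV
  have hcoeffm : ∀ i : Fin (m+1), (i : ℕ) ≠ 0 → f.coeff (m + 1 - (i : ℕ)) ∈ maximalIdeal R := by
    intro i hi
    apply hlow
    rw [hdeg]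
    have := i.isLt
    omega
  have hBiw : B ∈ iw R (m+1) := by
    intro i j hji
    by_cases hj0 : (j : ℕ) = 0
    · have hi0 : (i : ℕ) ≠ 0 := by omega
      rw [hB, Matrix.of_apply, if_pos hj0, hb]
      simp only [if_neg hi0]
      exact neg_mem (hcoeffm i hi0)
    · have hij' : ¬ i = j := fun hq => by rw [hq] at hji; omega
      rw [hB, Matrix.of_apply, if_neg hj0, if_neg hij']
      exact zero_mem _
  have hViw : V ∈ iw R (m+1) := by
    intro i j hji
    by_cases hj0 : (j : ℕ) = 0
    · have hi0 : (i : ℕ) ≠ 0 := by omega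
      rw [hV, Matrix.of_apply, if_pos hj0, if_neg hi0]
      exact Ideal.mul_mem_right _ _ (neg_mem (hcoeffm i hi0))
    · have hij' : ¬ i = j := fun hq => by rw [hq] at hji; omega
      rw [hV, Matrix.of_apply, if_neg hj0, if_neg hij']
      exact zero_mem _
  set z : Fin (m+1) := ⟨0, by omega⟩ with hzdef
  have hzv : (z : ℕ) = 0 := rfl
  have hBV : B * V = 1 := by
    ext i j
    rw [Matrix.mul_apply]
    by_cases hj0 : (j : ℕ) = 0
    · by_cases hi0 : (i : ℕ) = 0
      · have hijeq : j = i := Fin.ext (by omega)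
        subst hijeq
        rw [Finset.sum_eq_single_of_mem j (Finset.mem_univ j) ?s1]
        case s1 =>
          intro k _ hk
          have hk0 : ¬ (k : ℕ) = 0 := fun hq => hk (Fin.ext (by omega))
          have hik : ¬ j = k := fun hq => hk hq.symm
          simp [hB, hk0, hik]
        have e1 : B j j = -d := by simp [hB, hb, hj0]
        have e2 : V j j = -e := by simp [hV, hj0]
        rw [e1, e2, Matrix.one_apply_eq]
        linear_combination hde
      · have hzi : ¬ z = i := fun hq => hi0 (by rw [← hq])
        have hijne : i ≠ j := fun hq => hi0 (by rw [hq]; omega)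
        have hsum : ∑ k, B i k * V k j = ∑ k ∈ ({z, i} : Finset (Fin (m+1))), B i k * V k j := by
          symm
          apply Finset.sum_subset (Finset.subset_univ _)
          intro k _ hk
          simp only [Finset.mem_insert, Finset.mem_singleton, not_or] at hk
          have hk0 : ¬ (k : ℕ) = 0 := fun hq => hk.1 (Fin.ext (by omega))
          have hik : ¬ i = k := fun hq => hk.2 hq.symm
          simp [hB, hk0, hik]
        rw [hsum, Finset.sum_pair hzi]
        have e1 : B i z = -f.coeff (m + 1 - (i : ℕ)) := by simp [hB, hb, hzdef, hi0]
        have e2 : V z j = -e := by simp [hV, hzdef, hj0]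
        have e3 : B i i = 1 := by simp [hB, hi0]
        have e4 : V i j = -f.coeff (m + 1 - (i : ℕ)) * e := by simp [hV, hj0, hi0]
        rw [e1, e2, e3, e4, Matrix.one_apply_ne hijne]
        ring
    · rw [Finset.sum_eq_single_of_mem j (Finset.mem_univ j) ?s2]
      case s2 =>
        intro k _ hk
        simp [hV, hj0, hk]
      simp [hB, hV, hj0, Matrix.one_apply]
  have hVB : V * B = 1 := by
    ext i j
    rw [Matrix.mul_apply]
    by_cases hj0 : (j : ℕ) = 0
    · by_cases hi0 : (i : ℕ) = 0
      · have hijeq : j = i := Fin.ext (by omega)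
        subst hijeq
        rw [Finset.sum_eq_single_of_mem j (Finset.mem_univ j) ?s1]
        case s1 =>
          intro k _ hk
          have hk0 : ¬ (k : ℕ) = 0 := fun hq => hk (Fin.ext (by omega))
          have hik : ¬ j = k := fun hq => hk hq.symm
          simp [hV, hk0, hik]
        have e1 : V j j = -e := by simp [hV, hj0]
        have e2 : B j j = -d := by simp [hB, hb, hj0]
        rw [e1, e2, Matrix.one_apply_eq]
        linear_combination hde
      · have hzi : ¬ z = i := fun hq => hi0 (by rw [← hq])
        have hijne : i ≠ j := fun hq => hi0 (by rw [hq]; omega)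
        have hsum : ∑ k, V i k * B k j = ∑ k ∈ ({z, i} : Finset (Fin (m+1))), V i k * B k j := by
          symm
          apply Finset.sum_subset (Finset.subset_univ _)
          intro k _ hk
          simp only [Finset.mem_insert, Finset.mem_singleton, not_or] at hk
          have hk0 : ¬ (k : ℕ) = 0 := fun hq => hk.1 (Fin.ext (by omega))
          have hik : ¬ i = k := fun hq => hk.2 hq.symm
          simp [hV, hk0, hik]
        rw [hsum, Finset.sum_pair hzi]
        have e1 : V i z = -f.coeff (m + 1 - (i : ℕ)) * e := by simp [hV, hzdef, hi0]
        have e2 : B z j = -d := by simp [hB, hb, hzdef, hj0]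
        have e3 : V i i = 1 := by simp [hV, hi0]
        have e4 : B i j = -f.coeff (m + 1 - (i : ℕ)) := by simp [hB, hb, hj0, hi0]
        rw [e1, e2, e3, e4, Matrix.one_apply_ne hijne]
        linear_combination f.coeff (m + 1 - (i : ℕ)) * hde
    · rw [Finset.sum_eq_single_of_mem j (Finset.mem_univ j) ?s2]
      case s2 =>
        intro k _ hk
        simp [hB, hj0, hk]
      simp [hB, hV, hj0, Matrix.one_apply]
  -- entries of Π·B
  have hPiB : ∀ k j : Fin (m+1), (PiMat R ϖ (m+1) * B) k j
      = if (j : ℕ) = 0 then -f.coeff (m - (k : ℕ)) else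
        if (j : ℕ) = (k : ℕ) + 1 then 1 else 0 := by
    intro k j
    rw [Matrix.mul_apply]
    by_cases hk : (k : ℕ) < m
    · set k1 : Fin (m+1) := ⟨(k : ℕ) + 1, by omega⟩ with hk1def
      have hk1v : (k1 : ℕ) = (k : ℕ) + 1 := rfl
      rw [Finset.sum_eq_single_of_mem k1 (Finset.mem_univ k1) ?s1]
      case s1 =>
        intro t _ ht
        have h1' : ¬ (t : ℕ) = (k : ℕ) + 1 := fun hq => ht (Fin.ext (by omega))
        have h2' : ¬ (k : ℕ) = m := by omega
        simp [PiMat, h1', h2']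
      have ePi : PiMat R ϖ (m+1) k k1 = 1 := by simp [PiMat, hk1v]
      rw [ePi, one_mul]
      by_cases hj0 : (j : ℕ) = 0
      · have eB : B k1 j = -f.coeff (m + 1 - ((k : ℕ) + 1)) := by
          simp [hB, hb, hj0, hk1v]
        rw [eB, if_pos hj0, show m + 1 - ((k : ℕ) + 1) = m - (k : ℕ) by omega]
      · by_cases hjk : (j : ℕ) = (k : ℕ) + 1
        · have hk1j : k1 = j := Fin.ext (by omega)
          have eB : B k1 j = 1 := by simp [hB, hj0, hk1j]
          rw [eB, if_neg hj0, if_pos hjk]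
        · have hk1j : ¬ k1 = j := fun hq => hjk (by rw [← hq])
          have eB : B k1 j = 0 := by simp [hB, hj0, hk1j]
          rw [eB, if_neg hj0, if_neg hjk]
    · have hkm : (k : ℕ) = m := by have := k.isLt; omega
      rw [Finset.sum_eq_single_of_mem z (Finset.mem_univ z) ?s2]
      case s2 =>
        intro t _ ht
        have h1' : ¬ (t : ℕ) = (k : ℕ) + 1 := by have := t.isLt; omega
        have h2' : ¬ (t : ℕ) = 0 := fun hq => ht (Fin.ext (by rw [hq, hzv]))
        simp [PiMat, h1', h2']
      have ePi : PiMat R ϖ (m+1) k z = ϖ := by simp [PiMat, hkm, hzv]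
      by_cases hj0 : (j : ℕ) = 0
      · have eB : B z j = -d := by simp [hB, hb, hzv, hj0]
        rw [ePi, eB, if_pos hj0, show m - (k : ℕ) = 0 by omega]
        linear_combination - hd
      · have hzj : ¬ z = j := fun hq => hj0 (by rw [← hq])
        have hjk1 : ¬ (j : ℕ) = (k : ℕ) + 1 := by have := j.isLt; omega
        have eB : B z j = 0 := by simp [hB, hzv, hj0, hzj]
        rw [ePi, eB, mul_zero, if_neg hj0, if_neg hjk1]
  -- main identity  M·h = h·(Π·B)
  have hMh : M * h = h * (PiMat R ϖ (m+1) * B) := by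
    ext a i
    have hL : (M * h) a i = (M ^ (m - (i : ℕ) + 1)) a j0 := by
      rw [Matrix.mul_apply, pow_succ', Matrix.mul_apply]
      refine Finset.sum_congr rfl fun b _ => ?_
      rw [hh, Matrix.of_apply]
    by_cases hi0 : (i : ℕ) = 0
    · have hRs : (h * (PiMat R ϖ (m+1) * B)) a i
          = ∑ k : Fin (m+1), (M ^ (m - (k : ℕ))) a j0 * (-f.coeff (m - (k : ℕ))) := by
        rw [Matrix.mul_apply]
        refine Finset.sum_congr rfl fun k _ => ?_
        rw [hPiB k i, if_pos hi0, hh, Matrix.of_apply]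
      rw [hL, hRs, show m - (i : ℕ) + 1 = m + 1 by omega, hCH]
      have hneg : ((-∑ t ∈ Finset.range (m+1), f.coeff t • M ^ t) : Matrix _ _ R) a j0
          = -∑ t ∈ Finset.range (m+1), f.coeff t * (M ^ t) a j0 := by
        simp [Matrix.sum_apply, Matrix.smul_apply, smul_eq_mul]
      rw [hneg, Fin.sum_univ_eq_sum_range (fun k => (M ^ (m - k)) a j0 * (-f.coeff (m - k))),
        ← Finset.sum_range_reflect (fun t => f.coeff t * (M ^ t) a j0) (m+1), ← Finset.sum_neg_distrib]
      refine Finset.sum_congr rfl fun k hk => ?_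
      rw [show m + 1 - 1 - k = m - k by omega]
      ring
    · set i1 : Fin (m+1) := ⟨(i : ℕ) - 1, by omega⟩ with hi1
      have hRs : (h * (PiMat R ϖ (m+1) * B)) a i = (M ^ (m - ((i : ℕ) - 1))) a j0 := by
        rw [Matrix.mul_apply, Finset.sum_eq_single_of_mem i1 (Finset.mem_univ i1) ?s1]
        case s1 =>
          intro t _ ht
          rw [hPiB t i, if_neg hi0,
            if_neg (fun hq : (i : ℕ) = (t : ℕ) + 1 => ht (Fin.ext (by
              have h1 := i.isLt; have h2 := t.isLt
              simp only [hi1]; omega))),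
            mul_zero]
        rw [hPiB i1 i, if_neg hi0, if_pos (show (i : ℕ) = (i1 : ℕ) + 1 by
          simp only [hi1]; omega), mul_one, hh, Matrix.of_apply]
      rw [hL, hRs, show m - ((i : ℕ) - 1) = m - (i : ℕ) + 1 by have := i.isLt; omega]
  refine ⟨h, h⁻¹, Matrix.mul_nonsing_inv h hdetu, Matrix.nonsing_inv_mul h hdetu, B,
    ⟨hBiw, V, hViw, hBV, hVB⟩, ?_⟩
  rw [Matrix.mul_assoc, hMh, ← Matrix.mul_assoc, Matrix.nonsing_inv_mul h hdetu, Matrix.one_mul]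
end

section
/- Let p be a prime number, let j be an integer with 0 < j < p, and let B ∈ U_𝔦 (for n = p). Then the F-subalgebra F[Π^j·B] of Mat_p(F) generated by the matrix Π^j·B is a field, and its dimension as an F-vector space equals p. -/
open IsLocalRing

variable (R : Type*) [CommRing R] [IsDomain R] [IsDiscreteValuationRing R]

section Aux

variable {R}

set_option linter.unusedSectionVars false

section PiLemmas

variable (ϖ : R) {n : ℕ} (M : Matrix (Fin n) (Fin n) R)

theorem mul_piMat (i k : Fin n) :
    (M * PiMat R ϖ n) i k =
      if (k : ℕ) = 0 then ϖ * M i ⟨n - 1, Nat.sub_lt k.pos one_pos⟩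
      else M i ⟨(k : ℕ) - 1, lt_of_le_of_lt (Nat.sub_le _ _) k.isLt⟩ := by
  rw [Matrix.mul_apply]
  have hkn := k.isLt
  by_cases hk : (k : ℕ) = 0
  · rw [if_pos hk]
    rw [Finset.sum_eq_single (⟨n - 1, Nat.sub_lt k.pos one_pos⟩ : Fin n)]
    · simp only [PiMat, Matrix.of_apply, Fin.val_mk] <;> split_ifs with h1 h2 h3 h4 h5 h6 h7 h8 <;>
        first
          | exact mul_comm _ _
          | (exfalso; first | omega | (simp only [true_and, and_true, false_and, and_false, not_true, not_false_iff] at *; omega) | simp_all)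
    · intro l _ hl
      have hlv : (l : ℕ) ≠ n - 1 := fun h => hl (Fin.ext h)
      simp only [PiMat, Matrix.of_apply, Fin.val_mk] <;> split_ifs with h1 h2 h3 h4 h5 h6 h7 h8 <;>
        first
          | exact mul_zero _
          | (exfalso; first | omega | (simp only [true_and, and_true, false_and, and_false, not_true, not_false_iff] at *; omega) | simp_all)
    · intro h; exact absurd (Finset.mem_univ _) h
  · rw [if_neg hk]
    rw [Finset.sum_eq_single (⟨(k : ℕ) - 1, lt_of_le_of_lt (Nat.sub_le _ _) k.isLt⟩ : Fin n)]
    · simp only [PiMat, Matrix.of_apply, Fin.val_mk] <;> split_ifs with h1 h2 h3 h4 h5 h6 h7 h8 <;>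
        first
          | exact mul_one _
          | exact mul_zero _
          | (exfalso; first | omega | (simp only [true_and, and_true, false_and, and_false, not_true, not_false_iff] at *; omega) | simp_all)
    · intro l _ hl
      have hlv : (l : ℕ) ≠ (k : ℕ) - 1 := fun h => hl (Fin.ext h)
      have hln := l.isLt
      simp only [PiMat, Matrix.of_apply, Fin.val_mk] <;> split_ifs with h1 h2 h3 h4 h5 h6 h7 h8 <;>
        first
          | exact mul_zero _
          | (exfalso; first | omega | (simp only [true_and, and_true, false_and, and_false, not_true, not_false_iff] at *; omega) | simp_all)
    · intro h; exact absurd (Finset.mem_univ _) h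

theorem piMat_mul (i k : Fin n) :
    (PiMat R ϖ n * M) i k =
      if h : (i : ℕ) = n - 1 then ϖ * M ⟨0, i.pos⟩ k
      else M ⟨(i : ℕ) + 1, by have := i.isLt; omega⟩ k := by
  rw [Matrix.mul_apply]
  have hin := i.isLt
  by_cases hi : (i : ℕ) = n - 1
  · rw [dif_pos hi]
    rw [Finset.sum_eq_single (⟨0, i.pos⟩ : Fin n)]
    · simp only [PiMat, Matrix.of_apply, Fin.val_mk] <;> split_ifs with h1 h2 h3 h4 h5 h6 h7 h8 <;>
        first
          | rfl
          | (exfalso; first | omega | (simp only [true_and, and_true, false_and, and_false, not_true, not_false_iff] at *; omega) | simp_all)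
    · intro l _ hl
      have hlv : (l : ℕ) ≠ 0 := fun h => hl (Fin.ext h)
      have hln := l.isLt
      simp only [PiMat, Matrix.of_apply, Fin.val_mk] <;> split_ifs with h1 h2 h3 h4 h5 h6 h7 h8 <;>
        first
          | exact zero_mul _
          | (exfalso; first | omega | (simp only [true_and, and_true, false_and, and_false, not_true, not_false_iff] at *; omega) | simp_all)
    · intro h; exact absurd (Finset.mem_univ _) h
  · rw [dif_neg hi]
    have hin1 : (i : ℕ) + 1 < n := by omega
    rw [Finset.sum_eq_single (⟨(i : ℕ) + 1, hin1⟩ : Fin n)]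
    · simp only [PiMat, Matrix.of_apply, Fin.val_mk] <;> split_ifs with h1 h2 h3 h4 h5 h6 h7 h8 <;>
        first
          | exact one_mul _
          | (exfalso; first | omega | (simp only [true_and, and_true, false_and, and_false, not_true, not_false_iff] at *; omega) | simp_all)
    · intro l _ hl
      have hlv : (l : ℕ) ≠ (i : ℕ) + 1 := fun h => hl (Fin.ext h)
      have hln := l.isLt
      simp only [PiMat, Matrix.of_apply, Fin.val_mk] <;> split_ifs with h1 h2 h3 h4 h5 h6 h7 h8 <;>
        first
          | exact zero_mul _
          | (exfalso; first | omega | (simp only [true_and, and_true, false_and, and_false, not_true, not_false_iff] at *; omega) | simp_all)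
    · intro h; exact absurd (Finset.mem_univ _) h

theorem piMat_pow_apply (t : ℕ) (ht : t ≤ n) (i k : Fin n) :
    ((PiMat R ϖ n) ^ t) i k =
      if (i : ℕ) + t < n then (if (k : ℕ) = (i : ℕ) + t then 1 else 0)
      else (if (k : ℕ) + n = (i : ℕ) + t then ϖ else 0) := by
  induction t generalizing i k with
  | zero =>
    rw [pow_zero, if_pos (by simpa using i.isLt), Matrix.one_apply]
    by_cases h : i = k
    · subst h; rw [if_pos rfl, if_pos (by omega)]
    · rw [if_neg h, if_neg (by simpa [Fin.ext_iff, eq_comm] using h)]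
  | succ t ih =>
    have ht' : t ≤ n := by omega
    rw [pow_succ, mul_piMat, ih ht', ih ht']
    have hkn := k.isLt
    have hin := i.isLt
    simp only [Fin.val_mk]
    split_ifs with h1 h2 h3 h4 h5 h6 h7 h8 <;>
      first
        | rfl
        | exact mul_one _
        | exact mul_zero _
        | (exfalso; first | omega | (simp only [true_and, and_true, false_and, and_false, not_true, not_false_iff] at *; omega) | simp_all)

theorem piMat_pow_n (hn : 0 < n) : (PiMat R ϖ n) ^ n = ϖ • (1 : Matrix (Fin n) (Fin n) R) := by
  ext i k
  rw [piMat_pow_apply ϖ n le_rfl]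
  have hkn := k.isLt
  have hin := i.isLt
  rw [if_neg (by omega), Matrix.smul_apply, Matrix.one_apply, smul_eq_mul]
  by_cases h : i = k
  · subst h; rw [if_pos (by omega), if_pos rfl, mul_one]
  · rw [if_neg (by simpa [Fin.ext_iff] using fun hh => h (Fin.ext (by omega))), if_neg h, mul_zero]

end PiLemmas

section IwLemmas

variable {n : ℕ} (ϖ : R)

theorem one_mem_iw : (1 : Matrix (Fin n) (Fin n) R) ∈ iw R n := by
  intro i j hij
  rw [Matrix.one_apply_ne (fun h => by subst h; omega)]
  exact zero_mem _

theorem mul_mem_iw {M N : Matrix (Fin n) (Fin n) R} (hM : M ∈ iw R n) (hN : N ∈ iw R n) :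
    M * N ∈ iw R n := by
  intro i j hij
  rw [Matrix.mul_apply]
  refine Ideal.sum_mem _ fun l _ => ?_
  by_cases h : (l : ℕ) < (i : ℕ)
  · exact Ideal.mul_mem_right _ _ (hM i l h)
  · exact Ideal.mul_mem_left _ _ (hN l j (by omega))

theorem one_mem_Uiw : (1 : Matrix (Fin n) (Fin n) R) ∈ Uiw R n :=
  ⟨one_mem_iw, 1, one_mem_iw, one_mul 1, one_mul 1⟩

theorem mul_mem_Uiw {M N : Matrix (Fin n) (Fin n) R} (hM : M ∈ Uiw R n) (hN : N ∈ Uiw R n) :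
    M * N ∈ Uiw R n := by
  obtain ⟨hM1, V, hV, hMV, hVM⟩ := hM
  obtain ⟨hN1, W, hW, hNW, hWN⟩ := hN
  refine ⟨mul_mem_iw hM1 hN1, W * V, mul_mem_iw hW hV, ?_, ?_⟩
  · rw [mul_assoc, ← mul_assoc N W, hNW, one_mul, hMV]
  · rw [mul_assoc, ← mul_assoc V M, hVM, one_mul, hWN]

theorem piMat_left_cancel (hϖ0 : ϖ ≠ 0) {X Y : Matrix (Fin n) (Fin n) R}
    (h : PiMat R ϖ n * X = PiMat R ϖ n * Y) : X = Y := by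
  ext r c
  by_cases hr : (r : ℕ) = 0
  · have hn1 : n - 1 < n := Nat.sub_lt r.pos one_pos
    have := congrFun (congrFun h ⟨n - 1, hn1⟩) c
    rw [piMat_mul, piMat_mul, dif_pos (by simp), dif_pos (by simp)] at this
    have hr0 : r = (⟨0, r.pos⟩ : Fin n) := Fin.ext hr
    rw [hr0]
    exact mul_left_cancel₀ hϖ0 this
  · have hrn := r.isLt
    have hr1 : (r : ℕ) - 1 < n := by omega
    have := congrFun (congrFun h ⟨(r : ℕ) - 1, hr1⟩) c
    rw [piMat_mul, piMat_mul, dif_neg (by simp; omega), dif_neg (by simp; omega)] at this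
    simpa [Fin.ext_iff, (by omega : (r:ℕ) - 1 + 1 = (r:ℕ))] using this

theorem rot_exists (hϖ : Ideal.span {ϖ} = maximalIdeal R) {B : Matrix (Fin n) (Fin n) R} (hB : B ∈ iw R n) :
    ∃ C ∈ iw R n, B * PiMat R ϖ n = PiMat R ϖ n * C := by
  classical
  have hn : ∀ i : Fin n, (i : ℕ) < n := fun i => i.isLt
  -- entries needing division
  have hdiv : ∀ k : Fin n, (k : ℕ) ≠ 0 → ∀ (hn1 : n - 1 < n) (hk1 : (k:ℕ) - 1 < n),
      ∃ c : R, B ⟨n-1, hn1⟩ ⟨(k:ℕ)-1, hk1⟩ = ϖ * c := by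
    intro k hk hn1 hk1
    have hmem : B ⟨n-1, hn1⟩ ⟨(k:ℕ)-1, hk1⟩ ∈ maximalIdeal R := by
      apply hB
      simp only [Fin.val_mk]
      have := k.isLt
      omega
    rw [← hϖ, Ideal.mem_span_singleton] at hmem
    obtain ⟨c, hc⟩ := hmem
    exact ⟨c, hc⟩
  refine ⟨Matrix.of fun i k =>
    if hi : (i : ℕ) = 0 then
      (if hk : (k : ℕ) = 0 then B ⟨n-1, Nat.sub_lt i.pos one_pos⟩ ⟨n-1, Nat.sub_lt i.pos one_pos⟩
       else (hdiv k hk (Nat.sub_lt k.pos one_pos)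
          (lt_of_le_of_lt (Nat.sub_le _ _) k.isLt)).choose)
    else
      (if (k : ℕ) = 0 then
        ϖ * B ⟨(i:ℕ)-1, lt_of_le_of_lt (Nat.sub_le _ _) i.isLt⟩ ⟨n-1, Nat.sub_lt i.pos one_pos⟩
       else B ⟨(i:ℕ)-1, lt_of_le_of_lt (Nat.sub_le _ _) i.isLt⟩
          ⟨(k:ℕ)-1, lt_of_le_of_lt (Nat.sub_le _ _) k.isLt⟩), ?_, ?_⟩
  · -- membership in iw
    intro a b hba
    have han := a.isLt
    simp only [Matrix.of_apply]
    rw [dif_neg (by omega)]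
    by_cases hb : (b : ℕ) = 0
    · rw [if_pos hb, ← hϖ]
      exact Ideal.mul_mem_right _ _ (Ideal.subset_span rfl)
    · rw [if_neg hb]
      apply hB
      simp only [Fin.val_mk]
      omega
  · -- the intertwining identity
    ext i k
    rw [mul_piMat, piMat_mul]
    have hin := i.isLt
    have hkn := k.isLt
    by_cases hi : (i : ℕ) = n - 1
    · rw [dif_pos hi]
      simp only [Matrix.of_apply]
      rw [dif_pos (by simp)]
      by_cases hk : (k : ℕ) = 0
      · rw [if_pos hk, dif_pos hk]
        congr 1
        congr 1 <;> exact Fin.ext (by simp; omega)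
      · rw [if_neg hk, dif_neg hk]
        rw [← (hdiv k hk (Nat.sub_lt k.pos one_pos)
          (lt_of_le_of_lt (Nat.sub_le _ _) k.isLt)).choose_spec]
        congr 1
        exact Fin.ext (by simp; omega)
    · rw [dif_neg hi]
      simp only [Matrix.of_apply]
      rw [dif_neg (by simp)]
      by_cases hk : (k : ℕ) = 0
      · rw [if_pos hk, if_pos hk]
        simp only [Nat.add_sub_cancel, Fin.eta]
      · rw [if_neg hk, if_neg hk]
        simp only [Nat.add_sub_cancel, Fin.eta]

theorem piMat_ne_zero (hϖ : Ideal.span {ϖ} = maximalIdeal R) : ϖ ≠ 0 := by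
  intro h
  apply IsDiscreteValuationRing.not_a_field R
  rw [← hϖ, h]
  simp

theorem rotate_Uiw (hϖ : Ideal.span {ϖ} = maximalIdeal R) {B : Matrix (Fin n) (Fin n) R}
    (hB : B ∈ Uiw R n) : ∃ C ∈ Uiw R n, B * PiMat R ϖ n = PiMat R ϖ n * C := by
  obtain ⟨hB1, V, hV, hBV, hVB⟩ := hB
  obtain ⟨C, hC, hC2⟩ := rot_exists ϖ hϖ hB1
  obtain ⟨W, hW, hW2⟩ := rot_exists ϖ hϖ hV
  have hϖ0 := piMat_ne_zero ϖ hϖ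
  have hCW : C * W = 1 := by
    apply piMat_left_cancel ϖ hϖ0
    rw [mul_one, ← mul_assoc, ← hC2, mul_assoc, ← hW2, ← mul_assoc, hBV, one_mul]
  have hWC : W * C = 1 := by
    apply piMat_left_cancel ϖ hϖ0
    rw [mul_one, ← mul_assoc, ← hW2, mul_assoc, ← hC2, ← mul_assoc, hVB, one_mul]
  exact ⟨C, ⟨hC, W, hW, hCW, hWC⟩, hC2⟩

theorem rotate_pow_Uiw (hϖ : Ideal.span {ϖ} = maximalIdeal R) {B : Matrix (Fin n) (Fin n) R}
    (hB : B ∈ Uiw R n) (t : ℕ) :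
    ∃ C ∈ Uiw R n, B * (PiMat R ϖ n) ^ t = (PiMat R ϖ n) ^ t * C := by
  induction t with
  | zero => exact ⟨B, hB, by simp⟩
  | succ t ih =>
    obtain ⟨C, hC, hC2⟩ := ih
    obtain ⟨D, hD, hD2⟩ := rotate_Uiw ϖ hϖ hC
    exact ⟨D, hD, by rw [pow_succ, ← mul_assoc, hC2, mul_assoc, hD2, mul_assoc]⟩

theorem pow_form (hϖ : Ideal.span {ϖ} = maximalIdeal R) {B : Matrix (Fin n) (Fin n) R}
    (hB : B ∈ Uiw R n) (j : ℕ) (k : ℕ) :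
    ∃ C ∈ Uiw R n, ((PiMat R ϖ n) ^ j * B) ^ k = (PiMat R ϖ n) ^ (j * k) * C := by
  induction k with
  | zero => exact ⟨1, one_mem_Uiw, by simp⟩
  | succ k ih =>
    obtain ⟨C, hC, hC2⟩ := ih
    obtain ⟨D, hD, hD2⟩ := rotate_pow_Uiw ϖ hϖ hC j
    refine ⟨D * B, mul_mem_Uiw hD hB, ?_⟩
    rw [pow_succ, hC2, Nat.mul_succ, pow_add]
    calc (PiMat R ϖ n) ^ (j*k) * C * ((PiMat R ϖ n) ^ j * B)
        = (PiMat R ϖ n) ^ (j*k) * (C * (PiMat R ϖ n) ^ j) * B := by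
          rw [mul_assoc, mul_assoc, mul_assoc]
      _ = (PiMat R ϖ n) ^ (j*k) * (PiMat R ϖ n) ^ j * (D * B) := by
          rw [hD2]; simp only [mul_assoc]

end IwLemmas

section Core

open Polynomial IsLocalRing

variable {n : ℕ} (ϖ : R)

theorem det_isUnit_of_Uiw {C : Matrix (Fin n) (Fin n) R} (hC : C ∈ Uiw R n) :
    IsUnit C.det := by
  obtain ⟨-, V, -, hCV, -⟩ := hC
  exact IsUnit.of_mul_eq_one V.det (by rw [← Matrix.det_mul, hCV, Matrix.det_one])

theorem charpoly_eisenstein (hϖ : Ideal.span {ϖ} = maximalIdeal R) (hn : 0 < n)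
    {C : Matrix (Fin n) (Fin n) R} (hC : C ∈ Uiw R n) :
    (PiMat R ϖ n * C).charpoly.IsEisensteinAt (maximalIdeal R) := by
  set A := PiMat R ϖ n * C with hA
  have hϖmem : ϖ ∈ maximalIdeal R := hϖ ▸ Ideal.subset_span rfl
  have hirrϖ : Irreducible ϖ := (IsDiscreteValuationRing.irreducible_iff_uniformizer ϖ).mpr hϖ.symm
  have hϖ0 : ϖ ≠ 0 := hirrϖ.ne_zero
  -- A ^ n = ϖ • C₁
  obtain ⟨C₁, hC₁, hC₁2⟩ := pow_form ϖ hϖ hC 1 n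
  rw [pow_one, one_mul, piMat_pow_n ϖ hn, smul_mul_assoc, one_mul] at hC₁2
  -- reduction mod the maximal ideal is nilpotent
  set f := residue R with hf
  have hmapA : ∀ (M : Matrix (Fin n) (Fin n) R) (k : ℕ), (M ^ k).map f = (M.map f) ^ k := by
    intro M k
    simp only [← RingHom.mapMatrix_apply, map_pow]
  have hnil : IsNilpotent (A.map f) := by
    refine ⟨n, ?_⟩
    rw [← hmapA, hC₁2]
    ext i k
    simp only [Matrix.map_apply, Matrix.smul_apply, smul_eq_mul, map_mul, Matrix.zero_apply]
    rw [show f ϖ = 0 from Ideal.Quotient.eq_zero_iff_mem.mpr hϖmem, zero_mul]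
  have hcard : Fintype.card (Fin n) = n := Fintype.card_fin n
  have hcp : (A.map f).charpoly = X ^ n := by
    have h1 := Matrix.isNilpotent_charpoly_sub_pow_of_isNilpotent hnil
    rw [hcard] at h1
    have h2 := h1.eq_zero
    rwa [sub_eq_zero] at h2
  have hcpmap : A.charpoly.map f = X ^ n := by
    rw [← Matrix.charpoly_map, hcp]
  have hdeg : A.charpoly.natDegree = n := by
    rw [Matrix.charpoly_natDegree_eq_dim, hcard]
  have hmem : ∀ d, d < n → A.charpoly.coeff d ∈ maximalIdeal R := by
    intro d hd
    have : f (A.charpoly.coeff d) = 0 := by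
      rw [← Polynomial.coeff_map, hcpmap, Polynomial.coeff_X_pow, if_neg (by omega)]
    exact Ideal.Quotient.eq_zero_iff_mem.mp this
  -- the constant coefficient
  have hdetPi : ((PiMat R ϖ n).det) ^ n = ϖ ^ n := by
    rw [← Matrix.det_pow, piMat_pow_n ϖ hn, Matrix.det_smul, Matrix.det_one, mul_one, hcard]
  have hc0 : A.charpoly.coeff 0 = (-1 : R) ^ n * A.det := by
    have := Matrix.det_eq_sign_charpoly_coeff A
    rw [hcard] at this
    rw [this, ← mul_assoc, ← mul_pow]
    simp
  have hnotmem : A.charpoly.coeff 0 ∉ maximalIdeal R ^ 2 := by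
    intro hmem2
    rw [← hϖ, Ideal.span_singleton_pow, Ideal.mem_span_singleton] at hmem2
    rw [hc0, hA, Matrix.det_mul] at hmem2
    -- strip off the units
    have hdvd : ϖ ^ 2 ∣ (PiMat R ϖ n).det := by
      have hu1 : IsUnit ((-1 : R) ^ n) := (isUnit_one.neg).pow n
      obtain ⟨u, hu⟩ := hu1
      obtain ⟨v, hv⟩ := det_isUnit_of_Uiw hC
      rw [← hu, ← hv] at hmem2
      exact Units.dvd_mul_right.mp (Units.dvd_mul_left.mp hmem2)
    obtain ⟨c, hcc⟩ := hdvd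
    have : ϖ ^ n = ϖ ^ n * (ϖ ^ n * c ^ n) := by
      conv_lhs => rw [← hdetPi, hcc]
      ring
    have h1 : (1 : R) = ϖ ^ n * c ^ n := by
      have := mul_left_cancel₀ (pow_ne_zero n hϖ0) (this.symm.trans (mul_one _).symm)
      exact this.symm
    apply hirrϖ.not_isUnit
    apply IsUnit.of_mul_eq_one (a := ϖ) (ϖ ^ (n - 1) * c ^ n)
    calc ϖ * (ϖ ^ (n - 1) * c ^ n) = ϖ ^ (1 + (n - 1)) * c ^ n := by rw [pow_add, pow_one, mul_assoc]
    _ = 1 := by rw [show 1 + (n - 1) = n by omega, ← h1]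
  refine ⟨?_, fun {d} hd => hmem d (by omega), hnotmem⟩
  rw [(Matrix.charpoly_monic A).leadingCoeff]
  rw [← Ideal.ne_top_iff_one]
  exact (IsLocalRing.maximalIdeal.isMaximal R).ne_top

end Core

section Adjoin

open Polynomial Algebra

variable {F A : Type*} [Field F] [Ring A] [Algebra F A]

theorem myadjoin_facts (x : A) (hx : IsIntegral F x) :
    Module.finrank F (Algebra.adjoin F {x}) = (minpoly F x).natDegree ∧
    Module.Finite F (Algebra.adjoin F {x}) ∧
    (Irreducible (minpoly F x) → IsField (Algebra.adjoin F {x})) := by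
  set q : F[X] := minpoly F x with hq
  have hq0 : q ≠ 0 := minpoly.ne_zero hx
  let φ : F[X] →ₐ[F] A := Polynomial.aeval x
  have hrange : ∀ a : F[X], φ a ∈ Algebra.adjoin F {x} := by
    intro a
    rw [Algebra.adjoin_singleton_eq_range_aeval]
    exact ⟨a, rfl⟩
  let φ' : F[X] →ₐ[F] Algebra.adjoin F {x} := φ.codRestrict _ hrange
  have hsurj : Function.Surjective φ' := by
    rintro ⟨y, hy⟩
    rw [Algebra.adjoin_singleton_eq_range_aeval] at hy
    obtain ⟨a, ha⟩ := hy
    exact ⟨a, Subtype.ext ha⟩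
  have hker : RingHom.ker φ' = Ideal.span {q} := by
    ext a
    have h1 : φ' a = 0 ↔ Polynomial.aeval x a = 0 := by
      constructor
      · intro h; exact congrArg Subtype.val h
      · intro h; exact Subtype.ext h
    rw [RingHom.mem_ker, h1, Ideal.mem_span_singleton]
    constructor
    · intro h; exact minpoly.dvd F x h
    · rintro ⟨c, rfl⟩; rw [map_mul, hq, minpoly.aeval, zero_mul]
  let e : (F[X] ⧸ RingHom.ker φ') ≃ₐ[F] Algebra.adjoin F {x} :=
    Ideal.quotientKerAlgEquivOfSurjective hsurj
  let e2 : AdjoinRoot q ≃ₐ[F] (F[X] ⧸ RingHom.ker φ') :=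
    Ideal.quotientEquivAlgOfEq F hker.symm
  let e3 : AdjoinRoot q ≃ₐ[F] Algebra.adjoin F {x} := e2.trans e
  haveI : Module.Finite F (AdjoinRoot q) := (AdjoinRoot.powerBasis hq0).finite
  have hfin : Module.Finite F (Algebra.adjoin F {x}) :=
    Module.Finite.equiv e3.toLinearEquiv
  have hfr : Module.finrank F (Algebra.adjoin F {x}) = q.natDegree := by
    rw [← e3.toLinearEquiv.finrank_eq]
    simpa using (AdjoinRoot.powerBasis hq0).finrank
  refine ⟨hfr, hfin, fun hirr => ?_⟩
  letI : Fact (Irreducible q) := ⟨hirr⟩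
  exact e3.symm.toMulEquiv.isField (Field.toIsField (AdjoinRoot q))

end Adjoin

section CoreF

open Polynomial IsLocalRing

variable {n : ℕ} (ϖ : R) (F : Type*) [Field F] [Algebra R F] [IsFractionRing R F]

theorem core_j1 (hϖ : Ideal.span {ϖ} = maximalIdeal R) (hn : 0 < n)
    {C : Matrix (Fin n) (Fin n) R} (hC : C ∈ Uiw R n) :
    IsField (Algebra.adjoin F {(PiMat R ϖ n * C).map (algebraMap R F)}) ∧
    Module.finrank F (Algebra.adjoin F {(PiMat R ϖ n * C).map (algebraMap R F)}) = n := by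
  haveI : Nonempty (Fin n) := ⟨⟨0, hn⟩⟩
  set A := PiMat R ϖ n * C with hA
  set x := A.map (algebraMap R F) with hx
  have hE := charpoly_eisenstein ϖ hϖ hn hC
  have hmono := A.charpoly_monic
  have hirrR : Irreducible A.charpoly := by
    refine hE.irreducible ((maximalIdeal.isMaximal R).isPrime) hmono.isPrimitive ?_
    rw [Matrix.charpoly_natDegree_eq_dim, Fintype.card_fin]
    exact hn
  have hirrF : Irreducible (A.charpoly.map (algebraMap R F)) :=
    (hmono.irreducible_iff_irreducible_map_fraction_map).mp hirrR
  have hcpx : x.charpoly = A.charpoly.map (algebraMap R F) :=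
    Matrix.charpoly_map A (algebraMap R F)
  have hmonoF := x.charpoly_monic
  have hminx : minpoly F x = x.charpoly :=
    (minpoly.eq_of_irreducible_of_monic (hcpx ▸ hirrF) (Matrix.aeval_self_charpoly x)
      hmonoF).symm
  have hint : IsIntegral F x := ⟨x.charpoly, hmonoF, Matrix.aeval_self_charpoly x⟩
  obtain ⟨hfr, hfin, hfield⟩ := myadjoin_facts x hint
  constructor
  · exact hfield (by rw [hminx, hcpx]; exact hirrF)
  · rw [hfr, hminx, Matrix.charpoly_natDegree_eq_dim, Fintype.card_fin]

end CoreF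

section Final

open Polynomial IsLocalRing

theorem exists_inverse_mod (p j : ℕ) (hp : p.Prime) (hj0 : 0 < j) (hjp : j < p) :
    ∃ k m : ℕ, j * k = 1 + p * m := by
  haveI : Fact p.Prime := ⟨hp⟩
  have hjz : (j : ZMod p) ≠ 0 := by
    rw [Ne, ZMod.natCast_eq_zero_iff]
    exact fun h => absurd (Nat.le_of_dvd hj0 h) (by omega)
  set u := ((j : ZMod p))⁻¹ with hu
  have h1 : ((j * u.val : ℕ) : ZMod p) = ((1 : ℕ) : ZMod p) := by
    push_cast
    rw [ZMod.natCast_val u, ZMod.cast_id]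
    rw [hu, mul_inv_cancel₀ hjz]
  have h2 : j * u.val % p = 1 % p := (ZMod.natCast_eq_natCast_iff _ _ _).mp h1
  have h3 : 1 % p = 1 := Nat.mod_eq_of_lt hp.one_lt
  refine ⟨u.val, (j * u.val) / p, ?_⟩
  have := Nat.div_add_mod (j * u.val) p
  omega

variable (F : Type*) [Field F] [Algebra R F] [IsFractionRing R F]

theorem adjoin_piPow_mul_isField' (ϖ : R) (hϖ : Ideal.span {ϖ} = maximalIdeal R)
    (p : ℕ) (hp : p.Prime) (j : ℕ) (hj0 : 0 < j) (hjp : j < p)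
    (B : Matrix (Fin p) (Fin p) R) (hB : B ∈ Uiw R p) :
    IsField (Algebra.adjoin F {((PiMat R ϖ p) ^ j * B).map (algebraMap R F)}) ∧
    Module.finrank F
      (Algebra.adjoin F {((PiMat R ϖ p) ^ j * B).map (algebraMap R F)}) = p := by
  classical
  have hn : 0 < p := hp.pos
  haveI : Nonempty (Fin p) := ⟨⟨0, hn⟩⟩
  obtain ⟨k, m, hkm⟩ := exists_inverse_mod p j hp hj0 hjp
  set A := (PiMat R ϖ p) ^ j * B with hA
  set φ := algebraMap R F with hφ
  set x := A.map φ with hx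
  -- A ^ k = ϖ ^ m • (Π * C)
  obtain ⟨C, hC, hC2⟩ := pow_form ϖ hϖ hB j k
  rw [hkm, pow_add, pow_one, pow_mul, piMat_pow_n ϖ hn] at hC2
  have hC2' : A ^ k = ϖ ^ m • (PiMat R ϖ p * C) := by
    rw [hC2, _root_.smul_pow, one_pow, mul_smul_comm, smul_mul_assoc, mul_assoc, one_mul]
  -- over F
  have hxk : x ^ k = (φ ϖ) ^ m • (PiMat R ϖ p * C).map φ := by
    rw [hx, ← RingHom.mapMatrix_apply, ← map_pow, hC2', RingHom.mapMatrix_apply]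
    ext i l
    simp only [Matrix.map_apply, Matrix.smul_apply, smul_eq_mul, map_mul, map_pow]
  have hφϖ : φ ϖ ≠ 0 := fun h =>
    piMat_ne_zero ϖ hϖ ((injective_iff_map_eq_zero' φ).mp (IsFractionRing.injective R F) ϖ |>.mp h)
  have hDmem : (PiMat R ϖ p * C).map φ ∈ Algebra.adjoin F {x} := by
    have : (PiMat R ϖ p * C).map φ = ((φ ϖ) ^ m)⁻¹ • x ^ k := by
      rw [hxk, smul_smul, inv_mul_cancel₀ (pow_ne_zero m hφϖ), one_smul]
    rw [this]
    exact Subalgebra.smul_mem _ (pow_mem (Algebra.self_mem_adjoin_singleton F x) k) _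
  have hle : Algebra.adjoin F {(PiMat R ϖ p * C).map φ} ≤ Algebra.adjoin F {x} :=
    Algebra.adjoin_le (Set.singleton_subset_iff.mpr hDmem)
  -- dimensions
  obtain ⟨hDfield, hDfr⟩ := core_j1 ϖ F hϖ hn hC
  have hmonoF := x.charpoly_monic
  have hint : IsIntegral F x := ⟨x.charpoly, hmonoF, Matrix.aeval_self_charpoly x⟩
  obtain ⟨hfrA, hfinA, -⟩ := myadjoin_facts x hint
  have hAle : Module.finrank F (Algebra.adjoin F {x}) ≤ p := by
    rw [hfrA]
    have hdvd := minpoly.dvd F x (Matrix.aeval_self_charpoly x)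
    have := Polynomial.natDegree_le_of_dvd hdvd hmonoF.ne_zero
    rwa [Matrix.charpoly_natDegree_eq_dim, Fintype.card_fin] at this
  haveI : Module.Finite F (Subalgebra.toSubmodule (Algebra.adjoin F {x})) := hfinA
  have heq : Subalgebra.toSubmodule (Algebra.adjoin F {(PiMat R ϖ p * C).map φ}) =
      Subalgebra.toSubmodule (Algebra.adjoin F {x}) := by
    apply Submodule.eq_of_le_of_finrank_le hle
    calc Module.finrank F (Subalgebra.toSubmodule (Algebra.adjoin F {x}))
        ≤ p := hAle
      _ = Module.finrank F
          (Subalgebra.toSubmodule (Algebra.adjoin F {(PiMat R ϖ p * C).map φ})) := hDfr.symm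
  have heq' : Algebra.adjoin F {(PiMat R ϖ p * C).map φ} = Algebra.adjoin F {x} :=
    Subalgebra.toSubmodule_injective heq
  rw [← heq']
  exact ⟨hDfield, hDfr⟩

end Final

end Aux

variable (F : Type*) [Field F] [Algebra R F] [IsFractionRing R F]

/-- For `p` prime, `0 < j < p` and `B ∈ U_𝔦`, the `F`-subalgebra
`F[Π^j·B]` of `Mat_p(F)` is a field of `F`-dimension `p`. -/
theorem adjoin_piPow_mul_isField (ϖ : R) (hϖ : Ideal.span {ϖ} = maximalIdeal R)
    (p : ℕ) (hp : p.Prime) (j : ℕ) (hj0 : 0 < j) (hjp : j < p)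
    (B : Matrix (Fin p) (Fin p) R) (hB : B ∈ Uiw R p) :
    IsField (Algebra.adjoin F {((PiMat R ϖ p) ^ j * B).map (algebraMap R F)}) ∧
    Module.finrank F
      (Algebra.adjoin F {((PiMat R ϖ p) ^ j * B).map (algebraMap R F)}) = p := by
  exact adjoin_piPow_mul_isField' F ϖ hϖ p hp j hj0 hjp B hB
end

section
/- Let p be a prime number, let j be an integer with 1 < j < p, and let B ∈ U_𝔦 (for n = p). Let D ∈ Mat_p(k) be the reduction of Π^j·B modulo 𝔪. Then the centralizer of D in GL_p(k), i.e. {g ∈ GL_p(k) : g·D = D·g}, is not commutative. (In the terminology of the paper: Π^j·B is not regular.) -/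
open IsLocalRing

variable (R : Type*) [CommRing R] [IsDomain R] [IsDiscreteValuationRing R]

theorem aux_noncomm {K : Type*} [Field K] (p j : ℕ) (hj1 : 1 < j) (hjp : j < p)
    (D : Matrix (Fin p) (Fin p) K)
    (hD1 : ∀ i k : Fin p, (k : ℕ) < (i : ℕ) + j → D i k = 0)
    (hD2 : ∀ i k : Fin p, (k : ℕ) = (i : ℕ) + j → D i k ≠ 0) :
    ∃ g h : GL (Fin p) K,
      (g : Matrix (Fin p) (Fin p) K) * D = D * (g : Matrix (Fin p) (Fin p) K) ∧
      (h : Matrix (Fin p) (Fin p) K) * D = D * (h : Matrix (Fin p) (Fin p) K) ∧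
      g * h ≠ h * g := by
  have hj0 : 0 < j := by omega
  -- vanishing of entries of powers of D below the shifted diagonal
  have lowv : ∀ m (a k : Fin p), (k : ℕ) < (a : ℕ) + j * m → (D ^ m) a k = 0 := by
    intro m
    induction m with
    | zero =>
        intro a k hk
        have : k ≠ a := by intro h; subst h; omega
        simp [Matrix.one_apply, Ne.symm this]
    | succ m ih =>
        intro a k hk
        have hms : j * (m + 1) = j * m + j := by ring
        rw [pow_succ', Matrix.mul_apply]
        apply Finset.sum_eq_zero
        intro l _
        by_cases hl : (l : ℕ) < (a : ℕ) + j
        · rw [hD1 a l hl, zero_mul]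
        · rw [ih l k (by omega), mul_zero]
  -- nonvanishing on the shifted diagonal
  have diagv : ∀ m (a k : Fin p), (k : ℕ) = (a : ℕ) + j * m → (D ^ m) a k ≠ 0 := by
    intro m
    induction m with
    | zero =>
        intro a k hk
        have : a = k := Fin.ext (by omega)
        subst this
        simp [Matrix.one_apply]
    | succ m ih =>
        intro a k hk
        have hms : j * (m + 1) = j * m + j := by ring
        have hap : (a : ℕ) + j < p := by have := k.isLt; omega
        rw [pow_succ', Matrix.mul_apply]
        rw [Finset.sum_eq_single (⟨(a : ℕ) + j, hap⟩ : Fin p)]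
        · exact mul_ne_zero (hD2 a _ rfl) (ih _ k (by simp; omega))
        · intro l _ hl
          by_cases h2 : (l : ℕ) < (a : ℕ) + j
          · rw [hD1 a l h2, zero_mul]
          · have hgt : (a : ℕ) + j < (l : ℕ) := by
              rcases Nat.lt_or_ge ((a : ℕ) + j) (l : ℕ) with h | h
              · exact h
              · exact absurd (show l = ⟨(a : ℕ) + j, hap⟩ by apply Fin.ext; simp only [Fin.val_mk]; omega) hl
            rw [lowv m l k (by omega), mul_zero]
        · intro h; exact absurd (Finset.mem_univ _) h
  -- the shift-by-j matrix and the two centralizer generators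
  set NJ : Matrix (Fin p) (Fin p) K :=
    Matrix.of fun i k => if (k : ℕ) = (i : ℕ) + j then 1 else 0 with hNJ
  set A : Matrix (Fin p) (Fin p) K :=
    Matrix.of fun i k => if (i : ℕ) % j = 0 ∧ (k : ℕ) = (i : ℕ) + 1 then 1 else 0 with hA
  set A' : Matrix (Fin p) (Fin p) K :=
    Matrix.of fun i k => if (i : ℕ) % j = 1 ∧ (k : ℕ) = (i : ℕ) + (j - 1) then 1 else 0 with hA'
  -- multiplication by NJ on the left and right
  have hNJmul : ∀ (X : Matrix (Fin p) (Fin p) K) (i k : Fin p),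
      (NJ * X) i k = if h : (i : ℕ) + j < p then X ⟨(i : ℕ) + j, h⟩ k else 0 := by
    intro X i k
    rw [Matrix.mul_apply]
    split_ifs with h
    · rw [Finset.sum_eq_single (⟨(i : ℕ) + j, h⟩ : Fin p)]
      · simp [hNJ]
      · intro l _ hl
        have : (l : ℕ) ≠ (i : ℕ) + j := fun hc => hl (Fin.ext (by simpa using hc))
        simp [hNJ, this]
      · intro hn; exact absurd (Finset.mem_univ _) hn
    · apply Finset.sum_eq_zero
      intro l _
      have : (l : ℕ) ≠ (i : ℕ) + j := by have := l.isLt; omega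
      simp [hNJ, this]
  have hmulNJ : ∀ (X : Matrix (Fin p) (Fin p) K) (i k : Fin p),
      (X * NJ) i k = if j ≤ (k : ℕ) then
        X i ⟨(k : ℕ) - j, lt_of_le_of_lt (Nat.sub_le _ _) k.isLt⟩ else 0 := by
    intro X i k
    rw [Matrix.mul_apply]
    split_ifs with h
    · rw [Finset.sum_eq_single (⟨(k : ℕ) - j, lt_of_le_of_lt (Nat.sub_le _ _) k.isLt⟩ : Fin p)]
      · have : (k : ℕ) = ((k : ℕ) - j) + j := by omega
        simp [hNJ, ← this]
      · intro l _ hl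
        have : (k : ℕ) ≠ (l : ℕ) + j := by
          intro hc
          exact hl (Fin.ext (by simp only [Fin.val_mk]; omega))
        simp [hNJ, this]
      · intro hn; exact absurd (Finset.mem_univ _) hn
    · apply Finset.sum_eq_zero
      intro l _
      have : (k : ℕ) ≠ (l : ℕ) + j := by omega
      simp [hNJ, this]
  -- the conjugating matrix C
  set C : Matrix (Fin p) (Fin p) K :=
    Matrix.of fun i k =>
      (D ^ ((i : ℕ) / j)) ⟨(i : ℕ) % j, lt_trans (Nat.mod_lt _ hj0) hjp⟩ k with hC
  -- C intertwines D and NJ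
  have hCD : C * D = NJ * C := by
    ext i k
    rw [hNJmul]
    have hL : (C * D) i k =
        (D ^ ((i : ℕ) / j + 1)) ⟨(i : ℕ) % j, lt_trans (Nat.mod_lt _ hj0) hjp⟩ k := by
      rw [pow_succ, Matrix.mul_apply, Matrix.mul_apply]
      rfl
    rw [hL]
    split_ifs with h
    · have h1 : ((i : ℕ) + j) / j = (i : ℕ) / j + 1 := Nat.add_div_right _ hj0
      have h2 : ((i : ℕ) + j) % j = (i : ℕ) % j := Nat.add_mod_right _ _
      simp only [hC, Matrix.of_apply, Fin.val_mk, h1, h2]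
    · apply lowv
      simp only [Fin.val_mk]
      have := Nat.mod_add_div (i : ℕ) j
      have hms : j * ((i : ℕ) / j + 1) = j * ((i : ℕ) / j) + j := by ring
      have := k.isLt
      omega
  -- C is upper triangular with nonzero diagonal
  have hCtri : ∀ i k : Fin p, (k : ℕ) < (i : ℕ) → C i k = 0 := by
    intro i k hk
    apply lowv
    simp only [Fin.val_mk]
    have := Nat.mod_add_div (i : ℕ) j
    omega
  have hCdiag : ∀ i : Fin p, C i i ≠ 0 := by
    intro i
    apply diagv
    simp only [Fin.val_mk]
    have := Nat.mod_add_div (i : ℕ) j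
    omega
  have hCdet : IsUnit C.det := by
    have hBT : C.BlockTriangular id := fun i k h => hCtri i k h
    rw [Matrix.det_of_upperTriangular hBT]
    exact (Finset.prod_ne_zero_iff.2 fun i _ => hCdiag i).isUnit
  have hCC : C * C⁻¹ = 1 := Matrix.mul_nonsing_inv C hCdet
  have hCC' : C⁻¹ * C = 1 := Matrix.nonsing_inv_mul C hCdet
  have hDconj : D = C⁻¹ * (NJ * C) := by
    rw [← hCD, ← mul_assoc, hCC', one_mul]
  -- A and A' commute with NJ
  have hmodj : ∀ n : ℕ, (n + j) % j = n % j := fun n => Nat.add_mod_right n j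
  have hANJ : A * NJ = NJ * A := by
    ext i k
    rw [hmulNJ, hNJmul]
    have h2 := hmodj (i : ℕ)
    have hk := k.isLt
    split_ifs with ha hb hb
    · simp only [hA, Matrix.of_apply, Fin.val_mk]
      split_ifs with h3 h4 h4 <;> first | rfl | omega
    · simp only [hA, Matrix.of_apply, Fin.val_mk]
      split_ifs with h3 <;> first | rfl | omega
    · simp only [hA, Matrix.of_apply, Fin.val_mk]
      split_ifs with h3 <;> first | rfl | omega
    · rfl
  have hA'NJ : A' * NJ = NJ * A' := by
    ext i k
    rw [hmulNJ, hNJmul]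
    have h2 := hmodj (i : ℕ)
    have hk := k.isLt
    split_ifs with ha hb hb
    · simp only [hA', Matrix.of_apply, Fin.val_mk]
      split_ifs with h3 h4 h4 <;> first | rfl | omega
    · simp only [hA', Matrix.of_apply, Fin.val_mk]
      split_ifs with h3 <;> first | rfl | omega
    · simp only [hA', Matrix.of_apply, Fin.val_mk]
      split_ifs with h3 <;> first | rfl | omega
    · rfl
  -- A and A' are square-zero
  have hAsq : A * A = 0 := by
    ext i k
    rw [Matrix.mul_apply]
    apply Finset.sum_eq_zero
    intro l _
    simp only [hA, Matrix.of_apply]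
    split_ifs with h1 h2 <;> try simp
    exfalso
    obtain ⟨ha1, ha2⟩ := h1
    obtain ⟨hb1, hb2⟩ := h2
    rw [ha2, Nat.add_mod, ha1] at hb1
    simp [Nat.mod_eq_of_lt hj1] at hb1
  have hA'sq : A' * A' = 0 := by
    ext i k
    rw [Matrix.mul_apply]
    apply Finset.sum_eq_zero
    intro l _
    simp only [hA', Matrix.of_apply]
    split_ifs with h1 h2 <;> try simp
    exfalso
    obtain ⟨ha1, ha2⟩ := h1
    obtain ⟨hb1, hb2⟩ := h2
    have : (l : ℕ) % j = ((i : ℕ) + (j - 1)) % j := by rw [ha2]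
    rw [Nat.add_mod, ha1, Nat.mod_eq_of_lt (by omega : j - 1 < j)] at this
    have h1j : (1 + (j - 1)) % j = 0 := by
      have : 1 + (j - 1) = j := by omega
      simp [this]
    rw [h1j] at this
    omega
  -- A * A' and A' * A differ at the entry (0, j)
  have i0 : Fin p := ⟨0, by omega⟩
  have hABne : A * A' ≠ A' * A := by
    intro hEq
    have h0p : (0 : ℕ) < p := by omega
    have h1p : (1 : ℕ) < p := by omega
    have hval := congrFun (congrFun hEq ⟨0, h0p⟩) ⟨j, hjp⟩
    have hL : (A * A') ⟨0, h0p⟩ ⟨j, hjp⟩ = 1 := by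
      rw [Matrix.mul_apply]
      rw [Finset.sum_eq_single (⟨1, h1p⟩ : Fin p)]
      · have e1 : (1 : ℕ) % j = 1 := Nat.mod_eq_of_lt hj1
        have e2 : j = 1 + (j - 1) := by omega
        simp [hA, hA', e1, ← e2]
      · intro l _ hl
        have : (l : ℕ) ≠ 1 := fun hc => hl (Fin.ext (by simpa using hc))
        simp [hA, this]
      · intro hn; exact absurd (Finset.mem_univ _) hn
    have hR : (A' * A) ⟨0, h0p⟩ ⟨j, hjp⟩ = 0 := by
      rw [Matrix.mul_apply]
      apply Finset.sum_eq_zero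
      intro l _
      simp [hA']
    rw [hL, hR] at hval
    exact one_ne_zero hval
  -- commuting criterion
  have comm : ∀ X : Matrix (Fin p) (Fin p) K, X * NJ = NJ * X →
      (C⁻¹ * X * C) * D = D * (C⁻¹ * X * C) := by
    intro X hX
    have hL : (C⁻¹ * X * C) * D = C⁻¹ * (NJ * (X * C)) := by
      rw [hDconj]
      calc C⁻¹ * X * C * (C⁻¹ * (NJ * C))
          = C⁻¹ * (X * ((C * C⁻¹) * (NJ * C))) := by simp only [mul_assoc]
        _ = C⁻¹ * ((X * NJ) * C) := by rw [hCC, one_mul]; simp only [mul_assoc]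
        _ = C⁻¹ * (NJ * (X * C)) := by rw [hX, mul_assoc]
    have hR : D * (C⁻¹ * X * C) = C⁻¹ * (NJ * (X * C)) := by
      rw [hDconj]
      calc C⁻¹ * (NJ * C) * (C⁻¹ * X * C)
          = C⁻¹ * (NJ * ((C * C⁻¹) * (X * C))) := by simp only [mul_assoc]
        _ = C⁻¹ * (NJ * (X * C)) := by rw [hCC, one_mul]
    rw [hL, hR]
  -- square-zero matrices give units
  have hexp : ∀ X : Matrix (Fin p) (Fin p) K, X * X = 0 → (1 + X) * (1 - X) = 1 := by
    intro X hX
    have h : (1 + X) * (1 - X) = 1 + X - X - X * X := by noncomm_ring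
    rw [h, hX]; abel
  have hexp' : ∀ X : Matrix (Fin p) (Fin p) K, X * X = 0 → (1 - X) * (1 + X) = 1 := by
    intro X hX
    have h : (1 - X) * (1 + X) = 1 - X + X - X * X := by noncomm_ring
    rw [h, hX]; abel
  let Au : (Matrix (Fin p) (Fin p) K)ˣ := ⟨1 + A, 1 - A, hexp A hAsq, hexp' A hAsq⟩
  let A'u : (Matrix (Fin p) (Fin p) K)ˣ := ⟨1 + A', 1 - A', hexp A' hA'sq, hexp' A' hA'sq⟩
  let Cu : (Matrix (Fin p) (Fin p) K)ˣ := ⟨C, C⁻¹, hCC, hCC'⟩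
  refine ⟨Cu⁻¹ * Au * Cu, Cu⁻¹ * A'u * Cu, ?_, ?_, ?_⟩
  · show (C⁻¹ * (1 + A) * C) * D = D * (C⁻¹ * (1 + A) * C)
    exact comm _ (by rw [add_mul, mul_add, one_mul, mul_one, hANJ])
  · show (C⁻¹ * (1 + A') * C) * D = D * (C⁻¹ * (1 + A') * C)
    exact comm _ (by rw [add_mul, mul_add, one_mul, mul_one, hA'NJ])
  · intro hEq
    apply hABne
    have hval : (C⁻¹ * (1 + A) * C) * (C⁻¹ * (1 + A') * C)
        = (C⁻¹ * (1 + A') * C) * (C⁻¹ * (1 + A) * C) := congrArg Units.val hEq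
    have simp1 : ∀ X Y : Matrix (Fin p) (Fin p) K,
        (C⁻¹ * X * C) * (C⁻¹ * Y * C) = C⁻¹ * (X * Y) * C := by
      intro X Y
      calc (C⁻¹ * X * C) * (C⁻¹ * Y * C)
          = C⁻¹ * (X * ((C * C⁻¹) * (Y * C))) := by simp only [mul_assoc]
        _ = C⁻¹ * (X * (Y * C)) := by rw [hCC, one_mul]
        _ = C⁻¹ * (X * Y) * C := by simp only [mul_assoc]
    rw [simp1, simp1] at hval
    have h2 := congrArg (fun M => C * M * C⁻¹) hval
    have hc : ∀ X : Matrix (Fin p) (Fin p) K, C * (C⁻¹ * X * C) * C⁻¹ = X := by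
      intro X
      calc C * (C⁻¹ * X * C) * C⁻¹
          = (C * C⁻¹) * (X * (C * C⁻¹)) := by simp only [mul_assoc]
        _ = X := by rw [hCC, one_mul, mul_one]
    rw [hc, hc] at h2
    have e1 : (1 + A) * (1 + A') = 1 + A + A' + A * A' := by noncomm_ring
    have e2 : (1 + A') * (1 + A) = 1 + A' + A + A' * A := by noncomm_ring
    rw [e1, e2] at h2
    have e3 : A * A' = (1 + A + A' + A * A') - (1 + A + A') := by abel
    have e4 : A' * A = (1 + A' + A + A' * A) - (1 + A + A') := by abel
    rw [e3, e4, h2]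

set_option maxHeartbeats 1000000

/-- For `p` prime, `1 < j < p` and `B ∈ U_𝔦`, the centralizer in
`GL_p(k)` of the reduction `D` of `Π^j·B` modulo `𝔪` is not commutative, i.e. `Π^j·B`
is not regular. -/
theorem piPow_mul_not_regular (ϖ : R) (hϖ : Ideal.span {ϖ} = maximalIdeal R)
    (p : ℕ) (hp : p.Prime) (j : ℕ) (hj1 : 1 < j) (hjp : j < p)
    (B : Matrix (Fin p) (Fin p) R) (hB : B ∈ Uiw R p) :
    ∃ g h : GL (Fin p) (R ⧸ maximalIdeal R),
      (g : Matrix (Fin p) (Fin p) (R ⧸ maximalIdeal R)) *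
          ((PiMat R ϖ p) ^ j * B).map (Ideal.Quotient.mk (maximalIdeal R)) =
        ((PiMat R ϖ p) ^ j * B).map (Ideal.Quotient.mk (maximalIdeal R)) *
          (g : Matrix (Fin p) (Fin p) (R ⧸ maximalIdeal R)) ∧
      (h : Matrix (Fin p) (Fin p) (R ⧸ maximalIdeal R)) *
          ((PiMat R ϖ p) ^ j * B).map (Ideal.Quotient.mk (maximalIdeal R)) =
        ((PiMat R ϖ p) ^ j * B).map (Ideal.Quotient.mk (maximalIdeal R)) *
          (h : Matrix (Fin p) (Fin p) (R ⧸ maximalIdeal R)) ∧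
      g * h ≠ h * g := by
  have hj0 : 0 < j := by omega
  set π : R →+* R ⧸ maximalIdeal R := Ideal.Quotient.mk (maximalIdeal R) with hπ
  have hπϖ : π ϖ = 0 :=
    Ideal.Quotient.eq_zero_iff_mem.2 (hϖ ▸ Ideal.mem_span_singleton_self ϖ)
  obtain ⟨hBiw, v, hviw, hBv, hvB⟩ := hB
  set Bb : Matrix (Fin p) (Fin p) (R ⧸ maximalIdeal R) := B.map π with hBb
  have hBtri : ∀ i k : Fin p, (k : ℕ) < (i : ℕ) → Bb i k = 0 := by
    intro i k hk
    exact Ideal.Quotient.eq_zero_iff_mem.2 (hBiw i k hk)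
  have hBvb : Bb * v.map π = 1 := by
    rw [hBb, ← Matrix.map_mul, hBv, Matrix.map_one π (map_zero π) (map_one π)]
  have hBdet : IsUnit Bb.det := by
    apply IsUnit.of_mul_eq_one (v.map π).det
    rw [← Matrix.det_mul, hBvb, Matrix.det_one]
  have hBdiag : ∀ i : Fin p, Bb i i ≠ 0 := by
    have hBT : Bb.BlockTriangular id := fun i k h => hBtri i k h
    intro i
    have hd := Matrix.det_of_upperTriangular hBT
    rw [hd] at hBdet
    have := hBdet.ne_zero
    intro h0
    exact this (Finset.prod_eq_zero (Finset.mem_univ i) h0)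
  -- the reduction of PiMat is the shift matrix
  set Nk : Matrix (Fin p) (Fin p) (R ⧸ maximalIdeal R) := (PiMat R ϖ p).map π with hNkdef
  have hNkent : ∀ i k : Fin p, Nk i k = if (k : ℕ) = (i : ℕ) + 1 then 1 else 0 := by
    intro i k
    rw [hNkdef, Matrix.map_apply]
    show π (PiMat R ϖ p i k) = _
    rw [PiMat, Matrix.of_apply]
    split_ifs with h1 h2
    · exact map_one π
    · exact hπϖ
    · exact map_zero π
  have hNkpow : ∀ (m : ℕ) (i k : Fin p),
      (Nk ^ m) i k = if (k : ℕ) = (i : ℕ) + m then 1 else 0 := by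
    intro m
    induction m with
    | zero =>
        intro i k
        rw [pow_zero, Matrix.one_apply]
        by_cases h : i = k
        · subst h; simp
        · have : (k : ℕ) ≠ (i : ℕ) := fun hc => h (Fin.ext hc.symm)
          simp [h, this]
    | succ m ih =>
        intro i k
        rw [pow_succ, Matrix.mul_apply]
        by_cases h : (k : ℕ) = (i : ℕ) + (m + 1)
        · have him : (i : ℕ) + m < p := by have := k.isLt; omega
          rw [Finset.sum_eq_single (⟨(i : ℕ) + m, him⟩ : Fin p)]
          · have e2 : (k : ℕ) = (i : ℕ) + m + 1 := by omega
            rw [ih, hNkent]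
            simp [e2, h, Nat.add_assoc]
          · intro l _ hl
            have : (l : ℕ) ≠ (i : ℕ) + m := fun hc =>
              hl (Fin.ext (by simpa using hc))
            rw [ih, if_neg this, zero_mul]
          · intro hn; exact absurd (Finset.mem_univ _) hn
        · rw [if_neg h]
          apply Finset.sum_eq_zero
          intro l _
          by_cases hl : (l : ℕ) = (i : ℕ) + m
          · rw [hNkent, if_neg (by omega), mul_zero]
          · rw [ih, if_neg hl, zero_mul]
  -- identify D with Nk ^ j * Bb
  have hmp : ∀ m : ℕ, ((PiMat R ϖ p) ^ m).map π = ((PiMat R ϖ p).map π) ^ m := by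
    intro m
    induction m with
    | zero => simp [Matrix.map_one (⇑π) (map_zero π) (map_one π)]
    | succ m ih => rw [pow_succ, pow_succ, Matrix.map_mul, ih]
  have hDmap : ((PiMat R ϖ p) ^ j * B).map π = Nk ^ j * Bb := by
    rw [Matrix.map_mul, hNkdef, hBb, hmp]
  letI : Field (R ⧸ maximalIdeal R) := Ideal.Quotient.field (maximalIdeal R)
  rw [hDmap]
  apply aux_noncomm p j hj1 hjp
  · -- vanishing below the j-th superdiagonal
    intro i k hk
    rw [Matrix.mul_apply]
    apply Finset.sum_eq_zero
    intro l _
    by_cases hl : (l : ℕ) = (i : ℕ) + j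
    · rw [hBtri l k (by omega), mul_zero]
    · rw [hNkpow, if_neg hl, zero_mul]
  · -- nonvanishing on the j-th superdiagonal
    intro i k hk
    rw [Matrix.mul_apply]
    rw [Finset.sum_eq_single k]
    · rw [hNkpow, if_pos hk, one_mul]
      exact hBdiag k
    · intro l _ hl
      have : (l : ℕ) ≠ (i : ℕ) + j := fun hc => hl (Fin.ext (by omega))
      rw [hNkpow, if_neg this, zero_mul]
    · intro hn; exact absurd (Finset.mem_univ _) hn
end

section
/- Let n ≥ 1 and r ≥ 1 be integers and set l = ⌊(r+1)/2⌋. Then the kernel of the natural group homomorphism GLₙ(R/𝔪^r) → GLₙ(R/𝔪^l), induced by the quotient ring homomorphism R/𝔪^r → R/𝔪^l applied entrywise, is an abelian group. -/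
open IsLocalRing

/-- For `n, r ≥ 1` and `l = ⌊(r+1)/2⌋`, the kernel of the natural map
`GLₙ(R/𝔪^r) → GLₙ(R/𝔪^l)` is an abelian group. -/
theorem ker_GL_reduction_abelian
    (R : Type*) [CommRing R] [IsDomain R] [IsDiscreteValuationRing R]
    (n : ℕ) (hn : 1 ≤ n) (r : ℕ) (hr : 1 ≤ r) :
    ∀ x y : GL (Fin n) (R ⧸ (maximalIdeal R) ^ r),
      x ∈ MonoidHom.ker (Units.map (RingHom.toMonoidHom (RingHom.mapMatrix
        (Ideal.Quotient.factor (S := (maximalIdeal R) ^ r) (T := (maximalIdeal R) ^ ((r + 1) / 2))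
          (Ideal.pow_le_pow_right (by omega)))))) →
      y ∈ MonoidHom.ker (Units.map (RingHom.toMonoidHom (RingHom.mapMatrix
        (Ideal.Quotient.factor (S := (maximalIdeal R) ^ r) (T := (maximalIdeal R) ^ ((r + 1) / 2))
          (Ideal.pow_le_pow_right (by omega)))))) →
      x * y = y * x := by
  intro x y hx hy
  set l := (r + 1) / 2 with hl
  set f := Ideal.Quotient.factor (S := (maximalIdeal R) ^ r) (T := (maximalIdeal R) ^ l)
      (Ideal.pow_le_pow_right (by omega)) with hf
  -- key: products of kernel-of-f elements vanish
  have key : ∀ a b : R ⧸ (maximalIdeal R) ^ r, f a = 0 → f b = 0 → a * b = 0 := by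
    intro a b ha hb
    obtain ⟨a', rfl⟩ := Ideal.Quotient.mk_surjective a
    obtain ⟨b', rfl⟩ := Ideal.Quotient.mk_surjective b
    rw [hf, Ideal.Quotient.factor_mk, Ideal.Quotient.eq_zero_iff_mem] at ha hb
    rw [← map_mul, Ideal.Quotient.eq_zero_iff_mem]
    have : a' * b' ∈ (maximalIdeal R) ^ l * (maximalIdeal R) ^ l :=
      Ideal.mul_mem_mul ha hb
    rw [← pow_add] at this
    exact Ideal.pow_le_pow_right (by omega) this
  -- entry-level consequence of kernel membership
  have hker : ∀ z : GL (Fin n) (R ⧸ (maximalIdeal R) ^ r),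
      z ∈ MonoidHom.ker (Units.map (RingHom.toMonoidHom (RingHom.mapMatrix f))) →
      ∀ i j, f ((z.val - 1) i j) = 0 := by
    intro z hz i j
    rw [MonoidHom.mem_ker] at hz
    have h2 : (RingHom.mapMatrix f) z.val = 1 := congrArg Units.val hz
    have h3 := congrFun (congrFun h2 i) j
    simp only [RingHom.mapMatrix_apply, Matrix.map_apply] at h3
    simp only [Matrix.sub_apply, map_sub, h3]
    by_cases hij : i = j <;> simp [Matrix.one_apply, hij]
  have hx' := hker x hx
  have hy' := hker y hy
  have hA : (x.val - 1) * (y.val - 1) = 0 := by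
    ext i j
    rw [Matrix.mul_apply, Matrix.zero_apply]
    exact Finset.sum_eq_zero fun k _ => key _ _ (hx' i k) (hy' k j)
  have hB : (y.val - 1) * (x.val - 1) = 0 := by
    ext i j
    rw [Matrix.mul_apply, Matrix.zero_apply]
    exact Finset.sum_eq_zero fun k _ => key _ _ (hy' i k) (hx' k j)
  have e1 : x.val * y = x + y - 1 := by
    have h : x.val * y - (x.val + y - 1)
        = (x.val - 1) * (y.val - 1) := by
      noncomm_ring
    rw [hA] at h
    exact sub_eq_zero.mp h
  have e2 : y.val * x = y + x - 1 := by
    have h : y.val * x - (y.val + x - 1)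
        = (y.val - 1) * (x.val - 1) := by
      noncomm_ring
    rw [hB] at h
    exact sub_eq_zero.mp h
  exact Units.ext (by rw [Units.val_mul, Units.val_mul, e1, e2, add_comm])
end

section
/- Let n ≥ 1 and let g ∈ GLₙ(R) (an n×n matrix over R invertible with inverse over R). Then g·𝔦·g⁻¹ = 𝔦 (as subsets of Matₙ(R)) if and only if g ∈ U_𝔦. In other words, the intersection of the normalizer of 𝔦 in GLₙ(F) with GLₙ(R) equals U_𝔦. -/
open IsLocalRing

variable (R : Type*) [CommRing R] [IsDomain R] [IsDiscreteValuationRing R]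

/-- The Iwahori order is closed under multiplication. -/
lemma iw_mul {n : ℕ} {M N : Matrix (Fin n) (Fin n) R} (hM : M ∈ iw R n) (hN : N ∈ iw R n) :
    M * N ∈ iw R n := by
  intro i j hij
  rw [Matrix.mul_apply]
  refine Ideal.sum_mem _ fun k _ => ?_
  rcases lt_or_ge (k : ℕ) (i : ℕ) with h | h
  · exact Ideal.mul_mem_right _ _ (hM i k h)
  · exact Ideal.mul_mem_left _ _ (hN k j (lt_of_lt_of_le hij h))

lemma stdBasis_mem_iw {n : ℕ} {i j : Fin n} (h : (i : ℕ) ≤ (j : ℕ)) :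
    Matrix.single i j (1 : R) ∈ iw R n := by
  intro k l hkl
  by_cases hc : i = k ∧ j = l
  · obtain ⟨rfl, rfl⟩ := hc; omega
  · simp only [Matrix.single, Matrix.of_apply, if_neg hc]
    exact Submodule.zero_mem _

lemma mul_std_mul_apply {n : ℕ} (g ginv : Matrix (Fin n) (Fin n) R) (i j k l : Fin n) :
    (g * Matrix.single i j (1 : R) * ginv) k l = g k i * ginv j l := by
  simp [Matrix.mul_apply, Matrix.single, Finset.sum_ite_eq, ite_and, mul_comm]

/-- For `g ∈ GLₙ(R)`, `g·𝔦·g⁻¹ = 𝔦` if and only if `g ∈ U_𝔦`. -/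
theorem glR_normalizes_iwahori_iff (ϖ : R) (hϖ : Ideal.span {ϖ} = maximalIdeal R)
    (n : ℕ) (hn : 1 ≤ n) (g ginv : Matrix (Fin n) (Fin n) R)
    (hg : g * ginv = 1) (hg' : ginv * g = 1) :
    ((fun a => g * a * ginv) '' iw R n = iw R n) ↔ g ∈ Uiw R n := by
  classical
  have hprime : (maximalIdeal R).IsPrime := (maximalIdeal.isMaximal R).isPrime
  constructor
  · intro himg
    have key : ∀ b ∈ iw R n, g * b * ginv ∈ iw R n := by
      intro b hb; rw [← himg]; exact ⟨b, hb, rfl⟩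
    have key' : ∀ b ∈ iw R n, ginv * b * g ∈ iw R n := by
      intro b hb
      rw [← himg] at hb
      obtain ⟨a, ha, rfl⟩ := hb
      have e : ginv * (g * a * ginv) * g = a := by
        calc ginv * (g * a * ginv) * g = (ginv * g) * a * (ginv * g) := by
              noncomm_ring
          _ = a := by rw [hg', one_mul, mul_one]
      rw [e]; exact ha
    have P : ∀ i j k l : Fin n, (i : ℕ) ≤ (j : ℕ) → (l : ℕ) < (k : ℕ) →
        g k i * ginv j l ∈ maximalIdeal R := by
      intro i j k l hij hlk
      have h2 := key _ (stdBasis_mem_iw R hij) k l hlk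
      rwa [mul_std_mul_apply] at h2
    -- nonvanishing of columns of g and rows of ginv mod 𝔪
    have hgcol : ∀ i : Fin n, ∃ k, ginv i k * g k i ∉ maximalIdeal R := by
      intro i
      by_contra hc
      push_neg at hc
      have h2 : (ginv * g) i i ∈ maximalIdeal R := by
        rw [Matrix.mul_apply]; exact Ideal.sum_mem _ fun k _ => hc k
      rw [hg', Matrix.one_apply_eq] at h2
      exact hprime.1 ((Ideal.eq_top_iff_one _).2 h2)
    have hSr : ∀ i : Fin n,
        (Finset.univ.filter fun k => g k i ∉ maximalIdeal R).Nonempty := by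
      intro i
      obtain ⟨k, hk⟩ := hgcol i
      exact ⟨k, by simp only [Finset.mem_filter, Finset.mem_univ, true_and]; exact fun h => hk (Ideal.mul_mem_left _ _ h)⟩
    have hSc : ∀ j : Fin n,
        (Finset.univ.filter fun l => ginv j l ∉ maximalIdeal R).Nonempty := by
      intro j
      obtain ⟨k, hk⟩ := hgcol j
      exact ⟨k, by simp only [Finset.mem_filter, Finset.mem_univ, true_and]; exact fun h => hk (Ideal.mul_mem_right _ _ h)⟩
    set r : Fin n → Fin n :=
      fun i => (Finset.univ.filter fun k => g k i ∉ maximalIdeal R).max' (hSr i) with hrdef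
    set c : Fin n → Fin n :=
      fun j => (Finset.univ.filter fun l => ginv j l ∉ maximalIdeal R).min' (hSc j) with hcdef
    have hr_mem : ∀ i, g (r i) i ∉ maximalIdeal R := by
      intro i
      have := Finset.max'_mem _ (hSr i)
      simp only [Finset.mem_filter, Finset.mem_univ, true_and] at this
      exact this
    have hr_le : ∀ i k, g k i ∉ maximalIdeal R → k ≤ r i := by
      intro i k hk
      exact Finset.le_max' _ k (by simp only [Finset.mem_filter, Finset.mem_univ, true_and]; exact hk)
    have hc_mem : ∀ j, ginv j (c j) ∉ maximalIdeal R := by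
      intro j
      have := Finset.min'_mem _ (hSc j)
      simp only [Finset.mem_filter, Finset.mem_univ, true_and] at this
      exact this
    have hc_le : ∀ j l, ginv j l ∉ maximalIdeal R → c j ≤ l := by
      intro j l hl
      exact Finset.min'_le _ l (by simp only [Finset.mem_filter, Finset.mem_univ, true_and]; exact hl)
    have step1 : ∀ i j : Fin n, (i : ℕ) ≤ (j : ℕ) → r i ≤ c j := by
      intro i j hij
      by_contra hlt
      push_neg at hlt
      have hm := P i j (r i) (c j) hij hlt
      rcases hprime.mem_or_mem hm with h | h
      · exact hr_mem i h
      · exact hc_mem j h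
    have step2 : ∀ j : Fin n, c j ≤ r j := by
      intro j
      obtain ⟨k, hk⟩ := hgcol j
      have hk1 : ginv j k ∉ maximalIdeal R := fun h => hk (Ideal.mul_mem_right _ _ h)
      have hk2 : g k j ∉ maximalIdeal R := fun h => hk (Ideal.mul_mem_left _ _ h)
      exact le_trans (hc_le j k hk1) (hr_le j k hk2)
    have hcr : ∀ j, c j = r j := fun j => le_antisymm (step2 j) (step1 j j le_rfl)
    -- the diagonal term is at position r j
    have hdiag : ∀ j : Fin n, ginv j (r j) ∉ maximalIdeal R ∧ g (r j) j ∉ maximalIdeal R := by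
      intro j
      obtain ⟨k, hk⟩ := hgcol j
      have hk1 : ginv j k ∉ maximalIdeal R := fun h => hk (Ideal.mul_mem_right _ _ h)
      have hk2 : g k j ∉ maximalIdeal R := fun h => hk (Ideal.mul_mem_left _ _ h)
      have hkeq : k = r j := le_antisymm (hr_le j k hk2) ((hcr j) ▸ hc_le j k hk1)
      rw [← hkeq]; exact ⟨hk1, hk2⟩
    have haux : ∀ i i' : Fin n, i < i' → r i ≠ r i' := by
      intro i i' hlt heq
      have hterm : ∀ k : Fin n, k ≠ r i' → ginv i k * g k i' ∈ maximalIdeal R := by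
        intro k hk
        rcases lt_or_gt_of_ne hk with h | h
        · have : ginv i k ∈ maximalIdeal R := by
            by_contra hcon
            have := hc_le i k hcon
            rw [hcr i, heq] at this
            exact absurd h (not_lt.2 this)
          exact Ideal.mul_mem_right _ _ this
        · have : g k i' ∈ maximalIdeal R := by
            by_contra hcon
            exact absurd h (not_lt.2 (hr_le i' k hcon))
          exact Ideal.mul_mem_left _ _ this
      have hsum : ∑ k, ginv i k * g k i' ∈ maximalIdeal R := by
        rw [← Matrix.mul_apply, hg', Matrix.one_apply_ne (ne_of_lt hlt)]
        exact Submodule.zero_mem _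
      have hmain : ginv i (r i') * g (r i') i' ∈ maximalIdeal R := by
        have he := Finset.add_sum_erase Finset.univ (fun k => ginv i k * g k i')
          (Finset.mem_univ (r i'))
        have hrest : ∑ k ∈ Finset.univ.erase (r i'), ginv i k * g k i' ∈ maximalIdeal R :=
          Ideal.sum_mem _ fun k hkm => hterm k (Finset.ne_of_mem_erase hkm)
        have : ginv i (r i') * g (r i') i'
            = (∑ k, ginv i k * g k i') - ∑ k ∈ Finset.univ.erase (r i'), ginv i k * g k i' := by
          rw [← he]; ring
        rw [this]
        exact Submodule.sub_mem _ hsum hrest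
      have h1 : ginv i (r i') ∉ maximalIdeal R := heq ▸ (hdiag i).1
      have h2 : g (r i') i' ∉ maximalIdeal R := (hdiag i').2
      rcases hprime.mem_or_mem hmain with h | h
      · exact h1 h
      · exact h2 h
    have hinj : Function.Injective r := by
      intro i i' he
      by_contra hne
      rcases lt_or_gt_of_ne hne with h | h
      · exact haux i i' h he
      · exact haux i' i h he.symm
    have hmono : Monotone r := by
      intro i j hij
      calc r i ≤ c j := step1 i j hij
        _ = r j := hcr j
    have hsm : StrictMono r := hmono.strictMono_of_injective hinj
    haveI : WellFoundedLT (Fin n) := inferInstance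
    have hrid : r = id := by
      have hsurj : Function.Surjective r := Finite.injective_iff_surjective.mp hinj
      exact (StrictMono.range_inj (β := Fin n) (γ := Fin n) hsm strictMono_id).1
        (by rw [Set.range_id, Set.range_eq_univ.2 hsurj])
    have hgiw : g ∈ iw R n := by
      intro i j hji
      by_contra hcon
      have := hr_le j i hcon
      rw [hrid] at this
      exact absurd hji (not_lt.2 (by exact_mod_cast this))
    have hginviw : ginv ∈ iw R n := by
      intro i j hji
      by_contra hcon
      have := hc_le i j hcon
      rw [hcr i, hrid] at this
      exact absurd hji (not_lt.2 (by exact_mod_cast this))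
    exact ⟨hgiw, ginv, hginviw, hg, hg'⟩
  · rintro ⟨hgiw, v, hviw, hgv, hvg⟩
    have hv : v = ginv := by
      calc v = v * (g * ginv) := by rw [hg, mul_one]
        _ = (v * g) * ginv := by rw [mul_assoc]
        _ = ginv := by rw [hvg, one_mul]
    rw [hv] at hviw
    ext b
    constructor
    · rintro ⟨a, ha, rfl⟩
      exact iw_mul R (iw_mul R hgiw ha) hviw
    · intro hb
      refine ⟨ginv * b * g, iw_mul R (iw_mul R hviw hb) hgiw, ?_⟩
      show g * (ginv * b * g) * ginv = b
      calc g * (ginv * b * g) * ginv = (g * ginv) * b * (g * ginv) := by noncomm_ring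
        _ = b := by rw [hg, one_mul, mul_one]
end

section
/- Let n ≥ 1 and let J be a compact subgroup of GLₙ(F) such that every g ∈ J satisfies g·𝔦·g⁻¹ = 𝔦 (as subsets of Matₙ(F)). Then J ⊆ U_𝔦. -/
open IsLocalRing

variable (R : Type*) [CommRing R] [IsDomain R] [IsDiscreteValuationRing R]

variable (F : Type*) [Field F] [Algebra R F] [IsFractionRing R F]

section IwahoriAux

set_option linter.unusedSectionVars false

namespace IwProof

variable {R : Type*} [CommRing R] [IsDomain R] [IsDiscreteValuationRing R]
variable {F : Type*} [Field F] [Algebra R F] [IsFractionRing R F]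

variable (F) in
/-- `x` lies in the fractional ideal `ϖ^m R`. -/
def Wm (ϖ : R) (m : ℤ) (x : F) : Prop :=
  ∃ r : R, x = (algebraMap R F ϖ) ^ m * algebraMap R F r

variable (F) in
/-- `x` is exactly `ϖ^p` times a unit. -/
def lev (ϖ : R) (p : ℤ) (x : F) : Prop :=
  ∃ u : Rˣ, x = (algebraMap R F ϖ) ^ p * algebraMap R F (u : R)

variable (R F) in
theorem amap_inj : Function.Injective (algebraMap R F) :=
  IsFractionRing.injective R F

variable (F) in
theorem amap_unit_ne_zero (u : Rˣ) : algebraMap R F (u : R) ≠ 0 := fun h =>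
  u.ne_zero (amap_inj R F (by simpa using h))

variable (F) in
theorem amap_unit_inv (u : Rˣ) :
    algebraMap R F ((u⁻¹ : Rˣ) : R) = (algebraMap R F (u : R))⁻¹ := by
  refine eq_inv_of_mul_eq_one_left ?_
  rw [← map_mul]
  simp

variable (ϖ : R) (hϖ : Ideal.span {ϖ} = maximalIdeal R)
include hϖ

theorem irr : Irreducible ϖ :=
  (IsDiscreteValuationRing.irreducible_iff_uniformizer ϖ).mpr hϖ.symm

theorem piR_ne_zero : ϖ ≠ 0 := (irr ϖ hϖ).ne_zero

theorem piF_ne_zero : (algebraMap R F ϖ) ≠ 0 := by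
  intro h
  exact piR_ne_zero ϖ hϖ (amap_inj R F (by simpa using h))

theorem Wm_zero (m : ℤ) : Wm F ϖ m (0 : F) := ⟨0, by simp⟩

theorem Wm_mono {m m' : ℤ} (h : m' ≤ m) {x : F} (hx : Wm F ϖ m x) : Wm F ϖ m' x := by
  obtain ⟨r, rfl⟩ := hx
  refine ⟨ϖ ^ (m - m').toNat * r, ?_⟩
  rw [map_mul, map_pow, ← mul_assoc, ← zpow_natCast (algebraMap R F ϖ), ← zpow_add₀ (piF_ne_zero ϖ hϖ)]
  congr 2; omega

theorem Wm_add {m : ℤ} {x y : F} (hx : Wm F ϖ m x) (hy : Wm F ϖ m y) : Wm F ϖ m (x + y) := by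
  obtain ⟨r, rfl⟩ := hx; obtain ⟨s, rfl⟩ := hy
  exact ⟨r + s, by rw [map_add]; ring⟩

theorem Wm_mul {m m' : ℤ} {x y : F} (hx : Wm F ϖ m x) (hy : Wm F ϖ m' y) :
    Wm F ϖ (m + m') (x * y) := by
  obtain ⟨r, rfl⟩ := hx; obtain ⟨s, rfl⟩ := hy
  refine ⟨r * s, ?_⟩
  rw [map_mul, zpow_add₀ (piF_ne_zero ϖ hϖ)]
  ring

theorem Wm_neg {m : ℤ} {x : F} (hx : Wm F ϖ m x) : Wm F ϖ m (-x) := by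
  obtain ⟨r, rfl⟩ := hx
  exact ⟨-r, by rw [map_neg]; ring⟩

theorem Wm_sum {m : ℤ} {ι : Type*} (t : Finset ι) (f : ι → F)
    (h : ∀ i ∈ t, Wm F ϖ m (f i)) : Wm F ϖ m (∑ i ∈ t, f i) := by
  classical
  induction t using Finset.induction with
  | empty => simpa using Wm_zero ϖ hϖ m
  | @insert _ _ hni ih =>
    rw [Finset.sum_insert hni]
    exact Wm_add ϖ hϖ (h _ (Finset.mem_insert_self _ _))
      (ih fun i hi => h i (Finset.mem_insert_of_mem hi))

theorem Wm_zsmul {m : ℤ} {x : F} (k : ℤ) (hx : Wm F ϖ m x) : Wm F ϖ m (k • x) := by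
  obtain ⟨r, rfl⟩ := hx
  refine ⟨k • r, ?_⟩
  rw [zsmul_eq_mul, zsmul_eq_mul, map_mul, map_intCast]
  ring

theorem lev_ne_zero {p : ℤ} {x : F} (hx : lev F ϖ p x) : x ≠ 0 := by
  obtain ⟨u, rfl⟩ := hx
  exact mul_ne_zero (zpow_ne_zero _ (piF_ne_zero ϖ hϖ)) (amap_unit_ne_zero F u)

theorem lev_mul {p q : ℤ} {x y : F} (hx : lev F ϖ p x) (hy : lev F ϖ q y) :
    lev F ϖ (p + q) (x * y) := by
  obtain ⟨u, rfl⟩ := hx; obtain ⟨v, rfl⟩ := hy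
  refine ⟨u * v, ?_⟩
  rw [Units.val_mul, map_mul, zpow_add₀ (piF_ne_zero ϖ hϖ)]
  ring

theorem lev_inv {p : ℤ} {x : F} (hx : lev F ϖ p x) : lev F ϖ (-p) x⁻¹ := by
  obtain ⟨u, rfl⟩ := hx
  refine ⟨u⁻¹, ?_⟩
  rw [mul_inv, ← zpow_neg, amap_unit_inv]

theorem lev_neg {p : ℤ} {x : F} (hx : lev F ϖ p x) : lev F ϖ p (-x) := by
  obtain ⟨u, rfl⟩ := hx
  exact ⟨-u, by rw [Units.val_neg, map_neg]; ring⟩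

theorem lev_Wm {p : ℤ} {x : F} (hx : lev F ϖ p x) : Wm F ϖ p x := by
  obtain ⟨u, rfl⟩ := hx; exact ⟨u, rfl⟩

theorem lev_pi : lev F ϖ 1 (algebraMap R F ϖ) := ⟨1, by simp⟩

theorem lev_one : lev F ϖ 0 (1 : F) := ⟨1, by simp⟩

theorem lev_pow {p : ℤ} {x : F} (hx : lev F ϖ p x) (m : ℕ) : lev F ϖ (m * p) (x ^ m) := by
  induction m with
  | zero => simpa using lev_one ϖ hϖ
  | succ k ih =>
    have h := lev_mul ϖ hϖ ih hx
    rw [pow_succ]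
    have e : ((k:ℤ)+1) * p = ↑k * p + p := by ring
    rw [show ((k+1:ℕ):ℤ) = (k:ℤ)+1 by push_cast; ring, e]
    exact h

/-- key: Wm m x with x of level p implies m ≤ p -/
theorem lev_Wm_le {p m : ℤ} {x : F} (hx : lev F ϖ p x) (hm : Wm F ϖ m x) : m ≤ p := by
  by_contra hc
  push_neg at hc
  obtain ⟨u, hu⟩ := hx
  obtain ⟨r, hr⟩ := hm
  have h1 : (algebraMap R F) (ϖ ^ (m - p).toNat * r) = algebraMap R F (u : R) := by
    rw [map_mul, map_pow]
    have h2 : ((algebraMap R F) ϖ) ^ (m - p).toNat = ((algebraMap R F) ϖ) ^ (m - p) := by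
      rw [← zpow_natCast]; congr 1; omega
    rw [h2, zpow_sub₀ (piF_ne_zero ϖ hϖ)]
    have hp : ((algebraMap R F) ϖ) ^ p ≠ 0 := zpow_ne_zero _ (piF_ne_zero ϖ hϖ)
    field_simp
    rw [← hr, hu]
  have h2 : ϖ ^ (m - p).toNat * r = (u : R) := amap_inj R F h1
  have hdvd : ϖ ∣ (u : R) :=
    h2 ▸ dvd_mul_of_dvd_left (dvd_pow_self ϖ (by omega : (m - p).toNat ≠ 0)) r
  exact (irr ϖ hϖ).not_isUnit (isUnit_of_dvd_unit hdvd u.isUnit)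

theorem Wm_of_lev_le {p m : ℤ} {x : F} (hx : lev F ϖ p x) (hm : m ≤ p) : Wm F ϖ m x :=
  Wm_mono ϖ hϖ hm (lev_Wm ϖ hϖ hx)

/-- cancellation -/
theorem Wm_cancel {p m : ℤ} {x y : F} (hx : lev F ϖ p x) (hxy : Wm F ϖ m (x * y)) :
    Wm F ϖ (m - p) y := by
  obtain ⟨u, hu⟩ := hx
  obtain ⟨r, hr⟩ := hxy
  refine ⟨(u⁻¹ : Rˣ) * r, ?_⟩
  have hx0 : x ≠ 0 := lev_ne_zero ϖ hϖ ⟨u, hu⟩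
  have hy : y = x⁻¹ * (x * y) := by field_simp
  rw [hy, hr, hu, mul_inv, map_mul, zpow_sub₀ (piF_ne_zero ϖ hϖ), ← zpow_neg, amap_unit_inv]
  have hu0 : (algebraMap R F) (u : R) ≠ 0 := amap_unit_ne_zero F u
  have hp : ∀ q : ℤ, ((algebraMap R F) ϖ) ^ q ≠ 0 := fun q => zpow_ne_zero _ (piF_ne_zero ϖ hϖ)
  rw [div_eq_mul_inv, ← zpow_neg]
  ring

theorem lev_amap {a : R} (ha : a ≠ 0) : ∃ k : ℕ, lev F ϖ (k : ℤ) (algebraMap R F a) := by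
  obtain ⟨k, u, hu⟩ := IsDiscreteValuationRing.eq_unit_mul_pow_irreducible ha (irr ϖ hϖ)
  exact ⟨k, u, by rw [hu, map_mul, map_pow, zpow_natCast]; ring⟩

/-- existence of level for nonzero x -/
theorem lev_exists {x : F} (hx : x ≠ 0) : ∃ p : ℤ, lev F ϖ p x := by
  obtain ⟨a, s, hs, rfl⟩ := IsFractionRing.div_surjective (A := R) x
  have ha : a ≠ 0 := by intro h; apply hx; simp [h]
  have hs0 : (s : R) ≠ 0 := nonZeroDivisors.ne_zero hs
  obtain ⟨ka, hka⟩ := lev_amap (F := F) ϖ hϖ ha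
  obtain ⟨ks, hks⟩ := lev_amap (F := F) ϖ hϖ hs0
  refine ⟨(ka : ℤ) - ks, ?_⟩
  have h := lev_mul ϖ hϖ hka (lev_inv ϖ hϖ hks)
  rw [div_eq_mul_inv, sub_eq_add_neg]
  exact h

theorem lev_prod {ι : Type*} (t : Finset ι) (f : ι → F) (p : ι → ℤ)
    (h : ∀ i ∈ t, lev F ϖ (p i) (f i)) :
    lev F ϖ (∑ i ∈ t, p i) (∏ i ∈ t, f i) := by
  classical
  induction t using Finset.induction with
  | empty => simpa using lev_one ϖ hϖ
  | @insert _ _ hni ih =>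
    rw [Finset.sum_insert hni, Finset.prod_insert hni]
    exact lev_mul ϖ hϖ (h _ (Finset.mem_insert_self _ _))
      (ih fun i hi => h i (Finset.mem_insert_of_mem hi))

end IwProof

namespace IwProof2
open IwProof

variable {R : Type*} [CommRing R] [IsDomain R] [IsDiscreteValuationRing R]
variable {F : Type*} [Field F] [Algebra R F] [IsFractionRing R F]
variable (ϖ : R) (hϖ : Ideal.span {ϖ} = maximalIdeal R)

/-- indicator of "below diagonal" -/
def chi {n : ℕ} (a b : Fin n) : ℤ := if (b : ℕ) < (a : ℕ) then 1 else 0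

include hϖ

theorem one_not_Wm_one : ¬ Wm F ϖ 1 (1 : F) := by
  rintro ⟨r, hr⟩
  have h1 : algebraMap R F (ϖ * r) = algebraMap R F 1 := by
    rw [map_mul, map_one, hr, zpow_one]
  have h2 : ϖ * r = 1 := amap_inj R F h1
  exact (irr ϖ hϖ).not_isUnit (IsUnit.of_mul_eq_one _ h2)

theorem Wm_prod {ι : Type*} (t : Finset ι) (f : ι → F) (p : ι → ℤ)
    (h : ∀ i ∈ t, Wm F ϖ (p i) (f i)) :
    Wm F ϖ (∑ i ∈ t, p i) (∏ i ∈ t, f i) := by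
  classical
  induction t using Finset.induction with
  | empty => simpa using lev_Wm ϖ hϖ (lev_one ϖ hϖ)
  | @insert _ _ hni ih =>
    rw [Finset.sum_insert hni, Finset.prod_insert hni]
    exact Wm_mul ϖ hϖ (h _ (Finset.mem_insert_self _ _))
      (ih fun i hi => h i (Finset.mem_insert_of_mem hi))

theorem lev_add_Wm {p : ℤ} {x y : F} (hx : lev F ϖ p x) (hy : Wm F ϖ (p + 1) y) :
    lev F ϖ p (x + y) := by
  obtain ⟨u, rfl⟩ := hx
  obtain ⟨r, rfl⟩ := hy
  have hunit : IsUnit ((u : R) + ϖ * r) := by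
    by_contra hc
    have hmem : (u : R) + ϖ * r ∈ maximalIdeal R := hc
    have hϖm : ϖ * r ∈ maximalIdeal R := by
      rw [← hϖ]
      exact Ideal.mul_mem_right _ _ (Ideal.subset_span rfl)
    have : (u : R) ∈ maximalIdeal R := by
      have := Ideal.sub_mem _ hmem hϖm
      simpa using this
    exact this u.isUnit
  refine ⟨hunit.unit, ?_⟩
  rw [IsUnit.unit_spec, map_add, map_mul, zpow_add₀ (piF_ne_zero ϖ hϖ), zpow_one]
  ring

theorem lev_zsmul_sign {p : ℤ} {x : F} (e : ℤˣ) (hx : lev F ϖ p x) : lev F ϖ p (e • x) := by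
  rcases Int.units_eq_one_or e with rfl | rfl
  · simpa using hx
  · have : ((-1 : ℤˣ) : ℤ) • x = -x := by simp
    rw [Units.smul_def, this]
    exact lev_neg ϖ hϖ hx

theorem Wm_zsmul_sign {p : ℤ} {x : F} (e : ℤˣ) (hx : Wm F ϖ p x) : Wm F ϖ p (e • x) := by
  rcases Int.units_eq_one_or e with rfl | rfl
  · simpa using hx
  · have : ((-1 : ℤˣ) : ℤ) • x = -x := by simp
    rw [Units.smul_def, this]
    exact Wm_neg ϖ hϖ hx

end IwProof2

open IsLocalRing IwProof IwProof2

set_option linter.unusedSectionVars false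
set_option maxHeartbeats 1000000

namespace IwProof2

variable {R : Type*} [CommRing R] [IsDomain R] [IsDiscreteValuationRing R]
variable {F : Type*} [Field F] [Algebra R F] [IsFractionRing R F]
variable (ϖ : R) (hϖ : Ideal.span {ϖ} = maximalIdeal R)

include hϖ

/-- helpers about Fin -/
theorem perm_exists_lt {n : ℕ} (ρ : Fin n → Fin n) (hbij : Function.Bijective ρ)
    (hne : ρ ≠ id) : ∃ i : Fin n, (i : ℕ) < (ρ i : ℕ) := by
  by_contra hc
  push_neg at hc
  apply hne
  have hsum : ∑ i : Fin n, ((ρ i : ℕ)) = ∑ i : Fin n, (i : ℕ) :=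
    Function.Bijective.sum_comp hbij _
  funext i
  have := (Finset.sum_eq_sum_iff_of_le (fun (i : Fin n) _ => hc i)).mp hsum i (Finset.mem_univ i)
  exact Fin.ext this

theorem strictMono_bij_id {n : ℕ} (σ : Fin n → Fin n) (hsm : StrictMono σ)
    (hbij : Function.Bijective σ) : ∀ a, σ a = a := by
  have hle : ∀ k : ℕ, ∀ a : Fin n, (a : ℕ) = k → (a : ℕ) ≤ (σ a : ℕ) := by
    intro k
    induction k with
    | zero => intro a ha; omega
    | succ m ih =>
      intro a ha
      have hm : m < n := by omega
      have hlt : (⟨m, hm⟩ : Fin n) < a := by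
        rw [Fin.lt_def]; simp; omega
      have h1 := hsm hlt
      have h2 := ih ⟨m, hm⟩ rfl
      rw [Fin.lt_def] at h1
      simp at h2
      omega
  have hsum : ∑ i : Fin n, ((σ i : ℕ)) = ∑ i : Fin n, (i : ℕ) :=
    Function.Bijective.sum_comp hbij _
  intro a
  have := (Finset.sum_eq_sum_iff_of_le (fun (i : Fin n) _ => hle (i : ℕ) i rfl)).mp hsum.symm a
    (Finset.mem_univ a)
  exact (Fin.ext this).symm

/-- The main structural theorem on normalizing pairs. -/
theorem structure_thm {n : ℕ} (hn : 1 ≤ n) (g h : Matrix (Fin n) (Fin n) F)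
    (hgh : g * h = 1)
    (C1 : ∀ a i j b : Fin n, Wm F ϖ (chi a b - chi i j) (g a i * h j b))
    (C2 : ∀ a i j b : Fin n, Wm F ϖ (chi a b - chi i j) (h a i * g j b)) :
    ∃ D : ℤ, lev F ϖ D g.det ∧
      (D = 0 → (∀ a b, Wm F ϖ (chi a b) (g a b)) ∧ (∀ a b, Wm F ϖ (chi a b) (h a b))) := by
  classical
  -- step 1: choose σ and s
  have key : ∀ a : Fin n, ∃ i : Fin n, ∃ p : ℤ,
      lev F ϖ p (g a i) ∧ lev F ϖ (-p) (h i a) := by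
    intro a
    have hsum : ∑ i : Fin n, g a i * h i a = 1 := by
      have := congrFun (congrFun hgh a) a
      rw [Matrix.mul_apply] at this
      simpa [Matrix.one_apply] using this
    have hex : ∃ i : Fin n, ¬ Wm F ϖ 1 (g a i * h i a) := by
      by_contra hc
      push_neg at hc
      exact one_not_Wm_one ϖ hϖ (hsum ▸ Wm_sum ϖ hϖ Finset.univ _ (fun i _ => hc i))
    obtain ⟨i, hi⟩ := hex
    have hW0 : Wm F ϖ 0 (g a i * h i a) := by
      have := C1 a i i a
      simpa [chi] using this
    have hg0 : g a i ≠ 0 := by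
      intro hz; exact hi (by rw [hz, zero_mul]; exact Wm_zero ϖ hϖ 1)
    have hh0 : h i a ≠ 0 := by
      intro hz; exact hi (by rw [hz, mul_zero]; exact Wm_zero ϖ hϖ 1)
    obtain ⟨p, hp⟩ := lev_exists ϖ hϖ hg0
    obtain ⟨q, hq⟩ := lev_exists ϖ hϖ hh0
    have hpq : lev F ϖ (p + q) (g a i * h i a) := lev_mul ϖ hϖ hp hq
    have h1 : 0 ≤ p + q := lev_Wm_le ϖ hϖ hpq hW0
    have h2 : ¬ (1 ≤ p + q) := fun hle => hi (Wm_of_lev_le ϖ hϖ hpq hle)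
    have : q = -p := by omega
    exact ⟨i, p, hp, this ▸ hq⟩
  choose σ s hgs hhs using key
  -- inequality I1
  have I1 : ∀ a a' : Fin n, chi a a' - chi (σ a) (σ a') ≤ s a - s a' := by
    intro a a'
    have hW := C1 a (σ a) (σ a') a'
    have hlev : lev F ϖ (s a - s a') (g a (σ a) * h (σ a') a') :=
      sub_eq_add_neg (s a) (s a') ▸ lev_mul ϖ hϖ (hgs a) (hhs a')
    exact lev_Wm_le ϖ hϖ hlev hW
  -- injectivity of σ
  have hinj : Function.Injective σ := by
    intro a a' hani
    by_contra hne
    have h1 := I1 a a'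
    have h2 := I1 a' a
    rw [hani] at h1 h2
    simp only [chi] at h1 h2
    have hval : (a : ℕ) ≠ (a' : ℕ) := fun hv => hne (Fin.ext hv)
    split_ifs at h1 h2 <;> omega
  have hbij : Function.Bijective σ := Finite.injective_iff_bijective.mp hinj
  set σe : Equiv.Perm (Fin n) := Equiv.ofBijective σ hbij with hσe
  have hσe_apply : ∀ a, σe a = σ a := fun a => rfl
  -- I2 inequalities
  have I2g : ∀ a j b : Fin n, Wm F ϖ (s a + chi (σ a) b - chi a j) (g j b) := by
    intro a j b
    have hW := C2 (σ a) a j b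
    have := Wm_cancel ϖ hϖ (hhs a) hW
    convert this using 1
    ring
  have I2h : ∀ a j b : Fin n, Wm F ϖ (-(s a) + chi a b - chi (σ a) j) (h j b) := by
    intro a j b
    have hW := C1 a (σ a) j b
    have := Wm_cancel ϖ hϖ (hgs a) hW
    convert this using 1
    ring
  refine ⟨∑ a, s a, ?_, ?_⟩
  · -- determinant has level D
    rw [Matrix.det_apply]
    have hτ0 : (σe⁻¹ : Equiv.Perm (Fin n)) ∈ (Finset.univ : Finset (Equiv.Perm (Fin n))) :=
      Finset.mem_univ _
    rw [← Finset.add_sum_erase _ _ hτ0]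
    apply lev_add_Wm ϖ hϖ
    · -- main term
      apply lev_zsmul_sign ϖ hϖ
      have hprod : ∏ i, g (σe⁻¹ i) i = ∏ a, g a (σ a) := by
        rw [← Equiv.prod_comp σe (fun i => g (σe⁻¹ i) i)]
        apply Finset.prod_congr rfl
        intro a _
        rw [Equiv.Perm.inv_def, Equiv.symm_apply_apply]
        rfl
      rw [hprod]
      exact lev_prod ϖ hϖ _ _ _ (fun a _ => hgs a)
    · -- remainder terms
      apply Wm_sum ϖ hϖ
      intro τ hτ
      have hτne : τ ≠ σe⁻¹ := (Finset.mem_erase.mp hτ).1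
      apply Wm_zsmul_sign ϖ hϖ
      -- bound each factor
      have hfac : ∀ i : Fin n, Wm F ϖ (s (τ i) + chi (σ (τ i)) i) (g (τ i) i) := by
        intro i
        have := I2g (τ i) (τ i) i
        simpa [chi] using this
      have hprod := Wm_prod ϖ hϖ Finset.univ (fun i => g (τ i) i)
        (fun i => s (τ i) + chi (σ (τ i)) i) (fun i _ => hfac i)
      refine Wm_mono ϖ hϖ ?_ hprod
      rw [Finset.sum_add_distrib]
      have hs_sum : ∑ i, s (τ i) = ∑ a, s a := Equiv.sum_comp τ s
      rw [hs_sum]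
      have hpos : 1 ≤ ∑ i, chi (σ (τ i)) i := by
        have hρ : Function.Bijective (fun i => σ (τ i)) := hbij.comp τ.bijective
        have hρne : (fun i => σ (τ i)) ≠ id := by
          intro hid
          apply hτne
          ext i
          have : σ (τ i) = i := congrFun hid i
          have h2 : τ i = σe⁻¹ i := by
            apply σe.injective
            rw [Equiv.Perm.inv_def, Equiv.apply_symm_apply]
            exact this
          exact congrArg Fin.val h2
        obtain ⟨i, hi⟩ := perm_exists_lt ϖ hϖ _ hρ hρne
        have hterm : ∀ j : Fin n, (0:ℤ) ≤ chi (σ (τ j)) j := by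
          intro j; simp only [chi]; split_ifs <;> omega
        calc (1:ℤ) = chi (σ (τ i)) i := by simp only [chi]; rw [if_pos hi]
        _ ≤ ∑ j, chi (σ (τ j)) j :=
            Finset.single_le_sum (fun j _ => hterm j) (Finset.mem_univ i)
      omega
  · -- D = 0 implies the bounds
    intro hD
    -- s is "monotone" and s ≡ 0
    have hmono : ∀ a a' : Fin n, (a : ℕ) ≤ (a' : ℕ) → s a ≤ s a' := by
      intro a a' hle
      rcases Nat.eq_or_lt_of_le hle with heq | hlt
      · rw [Fin.ext heq]
      · have h1 := I1 a' a
        simp only [chi] at h1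
        rw [if_pos hlt] at h1
        split_ifs at h1 <;> omega
    have hgap : ∀ a a' : Fin n, s a - s a' ≤ 1 := by
      intro a a'
      have h1 := I1 a' a
      simp only [chi] at h1
      split_ifs at h1 <;> omega
    have hs0 : ∀ a, s a = 0 := by
      set a0 : Fin n := ⟨0, by omega⟩ with ha0
      have hlow : ∀ a, s a0 ≤ s a := fun a => hmono a0 a (by simp [ha0])
      have hup : ∀ a, s a ≤ s a0 + 1 := fun a => by have := hgap a a0; omega
      rcases lt_trichotomy (s a0) 0 with hneg | hzero | hpos
      · exfalso
        have hlt : ∑ a, s a < ∑ a : Fin n, (0:ℤ) := by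
          apply Finset.sum_lt_sum (fun i _ => by have := hup i; omega)
          exact ⟨a0, Finset.mem_univ a0, by omega⟩
        rw [Finset.sum_const, smul_zero] at hlt
        omega
      · intro a
        have hnn : ∀ i ∈ Finset.univ, (0:ℤ) ≤ s i := fun i _ => by
          have := hlow i; omega
        exact (Finset.sum_eq_zero_iff_of_nonneg hnn).mp hD a (Finset.mem_univ a)
      · exfalso
        have hge : ∑ a : Fin n, (1:ℤ) ≤ ∑ a, s a :=
          Finset.sum_le_sum (fun i _ => by have := hlow i; omega)
        rw [Finset.sum_const] at hge
        simp at hge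
        omega
    -- σ = id
    have hσid : ∀ a, σ a = a := by
      apply strictMono_bij_id ϖ hϖ σ ?_ hbij
      intro a a' hlt
      have h1 := I1 a' a
      rw [hs0, hs0] at h1
      simp only [chi] at h1
      rw [Fin.lt_def] at hlt
      rw [if_pos hlt] at h1
      rw [Fin.lt_def]
      by_contra hc
      rw [if_neg hc] at h1
      omega
    constructor
    · intro a b
      have := I2g a a b
      rw [hs0, hσid] at this
      simpa [chi] using this
    · intro a b
      have := I2h a a b
      rw [hs0, hσid] at this
      simpa [chi] using this

end IwProof2

section LAYER34

namespace IwProof2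
open IwProof

variable {R : Type*} [CommRing R] [IsDomain R] [IsDiscreteValuationRing R]
variable {F : Type*} [Field F] [Algebra R F] [IsFractionRing R F]
variable (ϖ : R) (hϖ : Ideal.span {ϖ} = maximalIdeal R)

include hϖ

theorem Wm_exists (y : F) : ∃ m : ℤ, Wm F ϖ m y := by
  by_cases hy : y = 0
  · exact ⟨0, hy ▸ Wm_zero ϖ hϖ 0⟩
  · obtain ⟨p, hp⟩ := lev_exists ϖ hϖ hy
    exact ⟨p, lev_Wm ϖ hϖ hp⟩

theorem compact_bounded [TopologicalSpace F] [IsTopologicalRing F]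
    (hbasis : (nhds (0 : F)).HasBasis (fun _ : ℤ => True)
      (fun m => {x : F | ∃ r : R, x = (algebraMap R F ϖ) ^ m * algebraMap R F r}))
    {K : Set F} (hK : IsCompact K) : ∃ m : ℤ, ∀ y ∈ K, Wm F ϖ m y := by
  classical
  set W0 : Set F := {x : F | ∃ r : R, x = (algebraMap R F ϖ) ^ (0:ℤ) * algebraMap R F r}
    with hW0def
  have hW0 : W0 ∈ nhds (0 : F) := hbasis.mem_of_mem trivial
  set U : F → Set F := fun y => (fun x => x - y) ⁻¹' W0 with hUdef
  have hU : ∀ y ∈ K, U y ∈ nhds y := by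
    intro y _
    apply ContinuousAt.preimage_mem_nhds (continuous_id.sub continuous_const).continuousAt
    simpa using hW0
  obtain ⟨t, _, hcov⟩ := hK.elim_nhds_subcover U hU
  choose f hf using Wm_exists (F := F) ϖ hϖ
  by_cases hne : t.Nonempty
  · refine ⟨t.inf' hne (fun y => min (f y) 0), ?_⟩
    intro y hy
    obtain ⟨x, hxt, hyx⟩ := Set.mem_iUnion₂.mp (hcov hy)
    have hWyx : Wm F ϖ 0 (y - x) := hyx
    have hle : t.inf' hne (fun y => min (f y) 0) ≤ min (f x) 0 := Finset.inf'_le _ hxt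
    have h1 : Wm F ϖ (t.inf' hne (fun y => min (f y) 0)) (y - x) :=
      Wm_mono ϖ hϖ (le_trans hle (min_le_right _ _)) hWyx
    have h2 : Wm F ϖ (t.inf' hne (fun y => min (f y) 0)) x :=
      Wm_mono ϖ hϖ (le_trans hle (min_le_left _ _)) (hf x)
    have := Wm_add ϖ hϖ h1 h2
    simpa using this
  · refine ⟨0, fun y hy => absurd (hcov hy) ?_⟩
    rw [Finset.not_nonempty_iff_eq_empty.mp hne]
    simp

omit hϖ in
/-- entry formula for g * stdBasisMatrix * h -/
theorem mul_std_mul {n : ℕ} (g h : Matrix (Fin n) (Fin n) F) (i j : Fin n) (c : F)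
    (a b : Fin n) :
    (g * Matrix.single i j c * h) a b = g a i * c * h j b := by
  rw [Matrix.mul_apply]
  rw [Finset.sum_eq_single j]
  · rw [Matrix.mul_single_apply_same]
  · intro q _ hq
    rw [Matrix.mul_single_apply_of_ne (hbj := hq)]
    exact zero_mul _
  · intro hj; exact absurd (Finset.mem_univ j) hj

omit hϖ in
theorem map_stdBasis {n : ℕ} (i j : Fin n) (c : R) :
    (Matrix.single i j c).map (algebraMap R F) =
      Matrix.single i j (algebraMap R F c) := by
  ext p q
  simp only [Matrix.map_apply, Matrix.single, Matrix.of_apply]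
  split_ifs <;> simp

/-- from the normalizing condition to the entrywise valuation conditions -/
theorem norm_to_C {n : ℕ} (g h : Matrix (Fin n) (Fin n) F)
    (hnorm : ∀ E ∈ iw R n, ∃ M ∈ iw R n,
      g * E.map (algebraMap R F) * h = M.map (algebraMap R F)) :
    ∀ a i j b : Fin n, Wm F ϖ (chi a b - chi i j) (g a i * h j b) := by
  intro a i j b
  by_cases hij : (j : ℕ) < (i : ℕ)
  · -- use E = stdBasisMatrix i j ϖ
    have hE : Matrix.single i j ϖ ∈ iw R n := by
      intro p q hpq
      simp only [Matrix.single, Matrix.of_apply]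
      split_ifs
      · rw [← hϖ]; exact Ideal.subset_span rfl
      · exact zero_mem _
    obtain ⟨M, hM, hMe⟩ := hnorm _ hE
    rw [map_stdBasis] at hMe
    have hentry : g a i * algebraMap R F ϖ * h j b = algebraMap R F (M a b) := by
      have := congrFun (congrFun hMe a) b
      rw [mul_std_mul] at this
      exact this
    have hW : Wm F ϖ (chi a b) (algebraMap R F ϖ * (g a i * h j b)) := by
      have heq : algebraMap R F ϖ * (g a i * h j b) = algebraMap R F (M a b) := by
        rw [← hentry]; ring
      by_cases hba : (b : ℕ) < (a : ℕ)
      · obtain ⟨r, hr⟩ := Ideal.mem_span_singleton.mp (hϖ ▸ hM a b hba)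
        refine ⟨r, ?_⟩
        have hc1 : chi a b = 1 := by simp [chi, hba]
        rw [heq, hr, map_mul, hc1, zpow_one]
      · refine ⟨M a b, ?_⟩
        have hc0 : chi a b = 0 := by simp [chi, hba]
        rw [heq, hc0, zpow_zero, one_mul]
    have := Wm_cancel ϖ hϖ (lev_pi ϖ hϖ) hW
    have hchi : chi i j = 1 := by simp [chi, hij]
    rw [hchi]
    exact this
  · -- use E = stdBasisMatrix i j 1
    have hE : Matrix.single i j (1 : R) ∈ iw R n := by
      intro p q hpq
      simp only [Matrix.single, Matrix.of_apply]
      split_ifs with hc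
      · exact absurd (hc.1 ▸ hc.2 ▸ hpq) hij
      · exact zero_mem _
    obtain ⟨M, hM, hMe⟩ := hnorm _ hE
    rw [map_stdBasis] at hMe
    have hentry : g a i * h j b = algebraMap R F (M a b) := by
      have := congrFun (congrFun hMe a) b
      rw [mul_std_mul] at this
      rw [map_one, mul_one] at this
      exact this
    have hchi : chi i j = 0 := by simp [chi, hij]
    rw [hchi, sub_zero]
    by_cases hba : (b : ℕ) < (a : ℕ)
    · obtain ⟨r, hr⟩ := Ideal.mem_span_singleton.mp (hϖ ▸ hM a b hba)
      refine ⟨r, ?_⟩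
      have hc1 : chi a b = 1 := by simp [chi, hba]
      rw [hentry, hr, map_mul, hc1, zpow_one]
    · refine ⟨M a b, ?_⟩
      have hc0 : chi a b = 0 := by simp [chi, hba]
      rw [hentry, hc0, zpow_zero, one_mul]

end IwProof2

end LAYER34

open IwProof IwProof2

end IwahoriAux

set_option maxHeartbeats 1000000

open IwProof IwProof2


/-- A compact subgroup of `GLₙ(F)` all of whose elements normalize the
Iwahori order `𝔦` is contained in `U_𝔦`. Here `F` carries the valuation topology: the
fractional ideals `ϖ^m·R`, `m ∈ ℤ`, form a basis of neighbourhoods of `0`. -/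
theorem compact_subgroup_normalizing_iwahori_subset_units
    [TopologicalSpace F] [IsTopologicalRing F]
    (ϖ : R) (hϖ : Ideal.span {ϖ} = maximalIdeal R)
    (hbasis : (nhds (0 : F)).HasBasis (fun _ : ℤ => True)
      (fun m => {x : F | ∃ r : R, x = (algebraMap R F ϖ) ^ m * algebraMap R F r}))
    (n : ℕ) (hn : 1 ≤ n)
    (J : Subgroup (GL (Fin n) F)) (hJcompact : IsCompact (J : Set (GL (Fin n) F)))
    (hJnorm : ∀ g ∈ J,
      (fun a => (g : Matrix (Fin n) (Fin n) F) * a *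
            ((g⁻¹ : GL (Fin n) F) : Matrix (Fin n) (Fin n) F)) ''
          ((fun M : Matrix (Fin n) (Fin n) R => M.map (algebraMap R F)) '' iw R n) =
        (fun M : Matrix (Fin n) (Fin n) R => M.map (algebraMap R F)) '' iw R n) :
    ∀ g ∈ J, ∃ u ∈ Uiw R n,
      (g : Matrix (Fin n) (Fin n) F) = u.map (algebraMap R F) := by
  classical
  -- uniform bound on entries of elements of J
  have hbound : ∃ N : ℤ, ∀ x ∈ J, ∀ a b : Fin n,
      Wm F ϖ N ((x : Matrix (Fin n) (Fin n) F) a b) := by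
    have hper : ∀ p : Fin n × Fin n, ∃ m : ℤ, ∀ x ∈ J,
        Wm F ϖ m ((x : Matrix (Fin n) (Fin n) F) p.1 p.2) := by
      intro p
      have hcont : Continuous fun x : GL (Fin n) F =>
          (x : Matrix (Fin n) (Fin n) F) p.1 p.2 :=
        Units.continuous_val.matrix_elem p.1 p.2
      have hKc : IsCompact ((fun x : GL (Fin n) F =>
          (x : Matrix (Fin n) (Fin n) F) p.1 p.2) '' (J : Set (GL (Fin n) F))) :=
        hJcompact.image hcont
      obtain ⟨m, hm⟩ := compact_bounded ϖ hϖ hbasis hKc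
      exact ⟨m, fun x hx => hm _ ⟨x, hx, rfl⟩⟩
    choose mf hmf using hper
    have hne : (Finset.univ : Finset (Fin n × Fin n)).Nonempty := by
      refine ⟨(⟨0, by omega⟩, ⟨0, by omega⟩), Finset.mem_univ _⟩
    refine ⟨Finset.univ.inf' hne mf, fun x hx a b => ?_⟩
    exact Wm_mono ϖ hϖ (Finset.inf'_le mf (Finset.mem_univ (a, b))) (hmf (a, b) x hx)
  obtain ⟨N, hN⟩ := hbound
  -- bound on determinants
  have hdetb : ∀ x ∈ J, Wm F ϖ ((n : ℤ) * N) ((x : Matrix (Fin n) (Fin n) F).det) := by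
    intro x hx
    rw [Matrix.det_apply]
    apply Wm_sum ϖ hϖ
    intro τ _
    apply Wm_zsmul_sign ϖ hϖ
    have := Wm_prod ϖ hϖ Finset.univ
      (fun i => (x : Matrix (Fin n) (Fin n) F) (τ i) i) (fun _ => N)
      (fun i _ => hN x hx (τ i) i)
    rwa [Finset.sum_const, Finset.card_univ, Fintype.card_fin, nsmul_eq_mul] at this
  -- the main argument
  intro g hg
  set gm := (g : Matrix (Fin n) (Fin n) F) with hgm
  set hm := ((g⁻¹ : GL (Fin n) F) : Matrix (Fin n) (Fin n) F) with hhm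
  have hunit1 : gm * hm = 1 := g.mul_inv
  have hunit2 : hm * gm = 1 := g.inv_mul
  have C1 : ∀ a i j b : Fin n, Wm F ϖ (chi a b - chi i j) (gm a i * hm j b) := by
    apply norm_to_C ϖ hϖ
    intro E hE
    have hmem : gm * E.map (algebraMap R F) * hm ∈
        (fun M : Matrix (Fin n) (Fin n) R => M.map (algebraMap R F)) '' iw R n := by
      rw [← hJnorm g hg]
      exact ⟨E.map (algebraMap R F), ⟨E, hE, rfl⟩, rfl⟩
    obtain ⟨M, hM, hMe⟩ := hmem
    exact ⟨M, hM, hMe.symm⟩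
  have C2 : ∀ a i j b : Fin n, Wm F ϖ (chi a b - chi i j) (hm a i * gm j b) := by
    apply norm_to_C ϖ hϖ
    intro E hE
    have h2 := hJnorm g⁻¹ (inv_mem hg)
    rw [inv_inv] at h2
    have hmem : hm * E.map (algebraMap R F) * gm ∈
        (fun M : Matrix (Fin n) (Fin n) R => M.map (algebraMap R F)) '' iw R n := by
      rw [← h2]
      exact ⟨E.map (algebraMap R F), ⟨E, hE, rfl⟩, rfl⟩
    obtain ⟨M, hM, hMe⟩ := hmem
    exact ⟨M, hM, hMe.symm⟩
  obtain ⟨D, hlevD, himp⟩ := structure_thm ϖ hϖ hn gm hm hunit1 C1 C2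
  -- D = 0 via compactness
  have hlevDh : lev F ϖ (-D) hm.det := by
    have hmul : gm.det * hm.det = 1 := by
      rw [← Matrix.det_mul, hunit1, Matrix.det_one]
    have : gm.det⁻¹ = hm.det := inv_eq_of_mul_eq_one_right hmul
    exact this ▸ lev_inv ϖ hϖ hlevD
  have hpow : ∀ m : ℕ, (n : ℤ) * N ≤ (m : ℤ) * D := by
    intro m
    have hgm' : g ^ m ∈ J := pow_mem hg m
    have hdet := hdetb _ hgm'
    have hcoe : ((g ^ m : GL (Fin n) F) : Matrix (Fin n) (Fin n) F) = gm ^ m :=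
      Units.val_pow_eq_pow_val g m
    rw [hcoe, Matrix.det_pow] at hdet
    exact lev_Wm_le ϖ hϖ (lev_pow ϖ hϖ hlevD m) hdet
  have hpowinv : ∀ m : ℕ, (n : ℤ) * N ≤ (m : ℤ) * (-D) := by
    intro m
    have hgm' : g⁻¹ ^ m ∈ J := pow_mem (inv_mem hg) m
    have hdet := hdetb _ hgm'
    have hcoe : ((g⁻¹ ^ m : GL (Fin n) F) : Matrix (Fin n) (Fin n) F) = hm ^ m :=
      Units.val_pow_eq_pow_val g⁻¹ m
    rw [hcoe, Matrix.det_pow] at hdet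
    exact lev_Wm_le ϖ hϖ (lev_pow ϖ hϖ hlevDh m) hdet
  have hD0 : D = 0 := by
    by_contra hD
    set B : ℤ := (n : ℤ) * N with hB
    set m : ℕ := B.natAbs + 1 with hmdef
    rcases lt_or_gt_of_ne hD with hneg | hpos
    · have h1 := hpow m
      have h2 : (m : ℤ) * D ≤ (m : ℤ) * (-1) :=
        mul_le_mul_of_nonneg_left (by omega) (by positivity)
      rw [mul_neg_one] at h2
      have h3 : B ≤ -(m : ℤ) := le_trans h1 h2
      omega
    · have h1 := hpowinv m
      have h2 : (m : ℤ) * (-D) ≤ (m : ℤ) * (-1) :=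
        mul_le_mul_of_nonneg_left (by omega) (by positivity)
      rw [mul_neg_one] at h2
      have h3 : B ≤ -(m : ℤ) := le_trans h1 h2
      omega
  obtain ⟨hgW, hhW⟩ := himp hD0
  -- construct the integral matrices
  have hconstruct : ∀ (x : Matrix (Fin n) (Fin n) F)
      (_ : ∀ a b, Wm F ϖ (chi a b) (x a b)),
      ∀ a b : Fin n, ∃ r : R, algebraMap R F r = x a b ∧
        ((b : ℕ) < (a : ℕ) → r ∈ maximalIdeal R) := by
    intro x hx a b
    by_cases hba : (b : ℕ) < (a : ℕ)
    · have hW := hx a b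
      have hc1 : chi a b = 1 := by simp [chi, hba]
      rw [hc1] at hW
      obtain ⟨r, hr⟩ := hW
      refine ⟨ϖ * r, ?_, fun _ => ?_⟩
      · rw [map_mul, hr, zpow_one]
      · rw [← hϖ]; exact Ideal.mul_mem_right _ _ (Ideal.subset_span rfl)
    · have hW := hx a b
      have hc0 : chi a b = 0 := by simp [chi, hba]
      rw [hc0] at hW
      obtain ⟨r, hr⟩ := hW
      refine ⟨r, ?_, fun hba' => absurd hba' hba⟩
      rw [hr, zpow_zero, one_mul]
  choose U hU1 hU2 using hconstruct gm hgW
  choose V hV1 hV2 using hconstruct hm hhW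
  have hUmap : (Matrix.of U).map (algebraMap R F) = gm := by
    ext a b; exact hU1 a b
  have hVmap : (Matrix.of V).map (algebraMap R F) = hm := by
    ext a b; exact hV1 a b
  have hmapinj : ∀ (M1 M2 : Matrix (Fin n) (Fin n) R),
      M1.map (algebraMap R F) = M2.map (algebraMap R F) → M1 = M2 := by
    intro M1 M2 hmm
    ext a b
    exact amap_inj R F (congrFun (congrFun hmm a) b)
  have hUV : Matrix.of U * Matrix.of V = 1 := by
    apply hmapinj
    rw [Matrix.map_mul, hUmap, hVmap, hunit1, Matrix.map_one _ (map_zero _) (map_one _)]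
  have hVU : Matrix.of V * Matrix.of U = 1 := by
    apply hmapinj
    rw [Matrix.map_mul, hUmap, hVmap, hunit2, Matrix.map_one _ (map_zero _) (map_one _)]
  refine ⟨Matrix.of U, ⟨fun a b hba => hU2 a b hba, Matrix.of V,
    fun a b hba => hV2 a b hba, hUV, hVU⟩, hUmap.symm⟩
end
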